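/- arXiv:1002.2733 — 12 statements merged into one kernel-verified Lean document; each statement's English description precedes it below -/
import Mathlib

section
/- Let H be a separable complex Hilbert space and let {S(t)}_{t∈ℝ} be a family of closed linear operators in H. Then the maximally defined operator 𝒮 in L²(ℝ; H), given by (𝒮f)(t) = S(t)f(t), is a closed operator in L²(ℝ; H). -/
open MeasureTheory Filter Topology

noncomputable section

variable {H : Type*} [NormedAddCommGroup H] [InnerProductSpace ℂ H]

/-- A family of vectors `g : ℝ → H` is weakly (Lebesgue) measurable if `t ↦ ⟪h, g t⟫` is
Lebesgue measurable for every `h ∈ H`. -/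
def WeakMeasVec (g : ℝ → H) : Prop :=
  ∀ h : H, AEMeasurable (fun t : ℝ => (inner ℂ h (g t) : ℂ)) volume

/-- A family of bounded operators `A : ℝ → B(H)` is weakly measurable. -/
def WeakMeasOp (A : ℝ → H →L[ℂ] H) : Prop :=
  ∀ h k : H, AEMeasurable (fun t : ℝ => (inner ℂ h (A t k) : ℂ)) volume

/-- A family of (in general unbounded) linear operators in `H` is weakly measurable if it
maps weakly measurable families of vectors in the domains to weakly measurable families. -/
def WeakMeasFam (T : ℝ → (H →ₗ.[ℂ] H)) : Prop :=
  ∀ f : (t : ℝ) → (T t).domain,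
    WeakMeasVec (fun t => (f t : H)) → WeakMeasVec (fun t => T t (f t))

/-- `P` is the characteristic matrix of `T`: the `2 × 2` block operator matrix of the
orthogonal projection of `H ⊕ H` onto the graph of `T`. -/
def IsCharMatrix (T : H →ₗ.[ℂ] H) (P : Fin 2 → Fin 2 → (H →L[ℂ] H)) : Prop :=
  (∀ x y : H, (P 0 0 x + P 0 1 y, P 1 0 x + P 1 1 y) ∈ T.graph) ∧
  (∀ x y : H, ∀ u : T.domain,
    (inner ℂ (x - (P 0 0 x + P 0 1 y)) (u : H) : ℂ)
      + (inner ℂ (y - (P 1 0 x + P 1 1 y)) (T u) : ℂ) = 0)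

/-- N-measurability of a family of densely defined closed operators: the entries of the
characteristic matrices form weakly measurable families of bounded operators. -/
def NMeas (T : ℝ → (H →ₗ.[ℂ] H)) : Prop :=
  ∃ P : ℝ → Fin 2 → Fin 2 → (H →L[ℂ] H),
    (∀ t, IsCharMatrix (T t) (P t)) ∧ ∀ j k : Fin 2, WeakMeasOp (fun t => P t j k)

/-- `R = (T - z I)⁻¹ ∈ B(H)`, i.e. `z` lies in the resolvent set of `T` with resolvent `R`. -/
def IsResolvent (T : H →ₗ.[ℂ] H) (z : ℂ) (R : H →L[ℂ] H) : Prop :=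
  (∀ x : H, ∃ hx : R x ∈ T.domain, T ⟨R x, hx⟩ - z • R x = x) ∧
  (∀ y : T.domain, R (T y - z • (y : H)) = (y : H))

/-- `B = (T⋆ T + I)⁻¹ ∈ B(H)`. -/
def IsInvTstarTAddI [CompleteSpace H] (T : H →ₗ.[ℂ] H) (B : H →L[ℂ] H) : Prop :=
  ∀ x : H, ∃ (h1 : B x ∈ T.domain) (h2 : T ⟨B x, h1⟩ ∈ T.adjoint.domain),
    T.adjoint ⟨T ⟨B x, h1⟩, h2⟩ + B x = x

/-- `C = T B`. -/
def IsTComp (T : H →ₗ.[ℂ] H) (B C : H →L[ℂ] H) : Prop :=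
  ∀ x : H, ∃ h1 : B x ∈ T.domain, T ⟨B x, h1⟩ = C x

/-- `D = (T T⋆ + I)⁻¹ ∈ B(H)`. -/
def IsInvTTstarAddI [CompleteSpace H] (T : H →ₗ.[ℂ] H) (D : H →L[ℂ] H) : Prop :=
  ∀ x : H, ∃ (h1 : D x ∈ T.adjoint.domain) (h2 : T.adjoint ⟨D x, h1⟩ ∈ T.domain),
    T ⟨T.adjoint ⟨D x, h1⟩, h2⟩ + D x = x

/-- `T` is a symmetric operator. -/
def IsSymmPMap (T : H →ₗ.[ℂ] H) : Prop :=
  ∀ x y : T.domain, (inner ℂ (x : H) (T y) : ℂ) = inner ℂ (T x) (y : H)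

/-- `T` is an unbounded operator. -/
def UnboundedPMap (T : H →ₗ.[ℂ] H) : Prop :=
  ¬ ∃ C : ℝ, ∀ x : T.domain, ‖T x‖ ≤ C * ‖(x : H)‖


/-- If each `S t` is a closed operator in the separable complex Hilbert space
`H`, then the maximally defined operator `𝒮` in `L²(ℝ; H)`, `(𝒮 f) t = S t (f t)`, is closed. -/
theorem stmt_0 {H : Type*} [NormedAddCommGroup H] [InnerProductSpace ℂ H]
    [CompleteSpace H] [TopologicalSpace.SeparableSpace H]
    (S : ℝ → (H →ₗ.[ℂ] H)) (hS : ∀ t, (S t).IsClosed)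
    (𝒮 : Lp H 2 (volume : Measure ℝ) →ₗ.[ℂ] Lp H 2 (volume : Measure ℝ))
    (h𝒮 : ∀ f g : Lp H 2 (volume : Measure ℝ),
      ((f, g) ∈ 𝒮.graph ↔
        ∀ᵐ t ∂(volume : Measure ℝ),
          ∃ hft : f t ∈ (S t).domain, S t ⟨f t, hft⟩ = g t)) :
    IsClosed (𝒮.graph : Set (Lp H 2 (volume : Measure ℝ) × Lp H 2 (volume : Measure ℝ))) := by
  rw [← isSeqClosed_iff_isClosed]
  intro p a hp ha
  obtain ⟨f, g⟩ := a
  rw [SetLike.mem_coe, h𝒮 f g]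
  -- convergence of components
  have hf : Tendsto (fun n => (p n).1) atTop (𝓝 f) := (continuous_fst.tendsto _).comp ha
  have hg : Tendsto (fun n => (p n).2) atTop (𝓝 g) := (continuous_snd.tendsto _).comp ha
  have hfm : TendstoInMeasure volume (fun n t => (p n).1 t) atTop f :=
    tendstoInMeasure_of_tendsto_Lp hf
  have hgm : TendstoInMeasure volume (fun n t => (p n).2 t) atTop g :=
    tendstoInMeasure_of_tendsto_Lp hg
  obtain ⟨ns, hns_mono, hns⟩ := hfm.exists_seq_tendsto_ae
  have hgm' : TendstoInMeasure volume (fun i t => (p (ns i)).2 t) atTop g := by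
    intro ε hε
    exact (hgm ε hε).comp hns_mono.tendsto_atTop
  obtain ⟨ms, hms_mono, hms⟩ := hgm'.exists_seq_tendsto_ae
  have hfs : ∀ᵐ t ∂(volume : Measure ℝ),
      Tendsto (fun i => (p (ns (ms i))).1 t) atTop (𝓝 (f t)) := by
    filter_upwards [hns] with t ht
    exact ht.comp hms_mono.tendsto_atTop
  have hmem : ∀ᵐ t ∂(volume : Measure ℝ), ∀ n,
      ∃ h : (p n).1 t ∈ (S t).domain, S t ⟨(p n).1 t, h⟩ = (p n).2 t := by
    rw [ae_all_iff]
    intro n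
    exact (h𝒮 _ _).mp (SetLike.mem_coe.mp (hp n))
  filter_upwards [hfs, hms, hmem] with t ht1 ht2 ht3
  have hgr : (f t, g t) ∈ (S t).graph := by
    have : ∀ i, ((p (ns (ms i))).1 t, (p (ns (ms i))).2 t) ∈ (S t).graph := by
      intro i
      obtain ⟨h1, h2⟩ := ht3 (ns (ms i))
      rw [LinearPMap.mem_graph_iff]
      exact ⟨⟨_, h1⟩, rfl, h2⟩
    exact (hS t).mem_of_tendsto (ht1.prodMk_nhds ht2) (Eventually.of_forall this)
  rw [LinearPMap.mem_graph_iff] at hgr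
  obtain ⟨x, hx1, hx2⟩ := hgr
  simp only at hx1 hx2
  refine ⟨hx1 ▸ x.2, ?_⟩
  rw [← hx2]
  congr 1
  exact Subtype.ext hx1.symm

end
end

section
/- Let H be a separable complex Hilbert space and let {T(t)}_{t∈ℝ} be a family of densely defined closed linear operators in H. For each t ∈ ℝ let B(t), C(t) ∈ B(H) be the bounded operators with B(t) = (T(t)*T(t) + I)^{−1} (i.e., for every x ∈ H, B(t)x ∈ dom(T(t)), T(t)B(t)x ∈ dom(T(t)*), and T(t)*T(t)B(t)x + B(t)x = x) and C(t) = T(t)B(t). If the families {T(t)}_{t∈ℝ}, {B(t)}_{t∈ℝ}, and {C(t)}_{t∈ℝ} are weakly measurable, then the family {T(t)}_{t∈ℝ} is N-measurable; in particular, every bounded operator D(t) ∈ B(H) satisfying (for every x ∈ H) D(t)x ∈ dom(T(t)*), T(t)*D(t)x ∈ dom(T(t)), and T(t)T(t)*D(t)x + D(t)x = x, yields a weakly measurable family {D(t)}_{t∈ℝ}. -/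
open MeasureTheory

noncomputable section

variable {H : Type*} [NormedAddCommGroup H] [InnerProductSpace ℂ H]

section Stmt1Aux

set_option linter.unusedSectionVars false

variable {H : Type*} [NormedAddCommGroup H] [InnerProductSpace ℂ H] [CompleteSpace H]

/-- The graph of `T` viewed as a submodule of `WithLp 2 (H × H)`. -/
def graphSub (T : H →ₗ.[ℂ] H) : Submodule ℂ (WithLp 2 (H × H)) :=
  T.graph.comap (WithLp.prodContinuousLinearEquiv 2 ℂ H H : WithLp 2 (H × H) →ₗ[ℂ] H × H)

lemma mem_graphSub {T : H →ₗ.[ℂ] H} {v : WithLp 2 (H × H)} :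
    v ∈ graphSub T ↔ (v.fst, v.snd) ∈ T.graph := Iff.rfl

lemma graphSub_isClosed (T : H →ₗ.[ℂ] H) (hc : T.IsClosed) :
    IsClosed ((graphSub T : Submodule ℂ (WithLp 2 (H × H))) : Set (WithLp 2 (H × H))) :=
  hc.preimage (WithLp.prodContinuousLinearEquiv 2 ℂ H H).continuous

/-- The orthogonal projection of `WithLp 2 (H × H)` onto the graph of `T`. -/
def projQ (T : H →ₗ.[ℂ] H) (hc : T.IsClosed) :
    WithLp 2 (H × H) →L[ℂ] WithLp 2 (H × H) :=
  haveI : CompleteSpace (graphSub T) := (graphSub_isClosed T hc).completeSpace_coe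
  (graphSub T).subtypeL.comp (Submodule.orthogonalProjectionOnto (graphSub T))

lemma projQ_mem (T : H →ₗ.[ℂ] H) (hc : T.IsClosed) (v : WithLp 2 (H × H)) :
    projQ T hc v ∈ graphSub T := by
  haveI : CompleteSpace (graphSub T) := (graphSub_isClosed T hc).completeSpace_coe
  exact (Submodule.orthogonalProjectionOnto (graphSub T) v).2

lemma projQ_inner (T : H →ₗ.[ℂ] H) (hc : T.IsClosed) (v : WithLp 2 (H × H))
    (w : WithLp 2 (H × H)) (hw : w ∈ graphSub T) :
    (inner ℂ (v - projQ T hc v) w : ℂ) = 0 := by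
  haveI : CompleteSpace (graphSub T) := (graphSub_isClosed T hc).completeSpace_coe
  exact Submodule.starProjection_inner_eq_zero v w hw

lemma projQ_eq (T : H →ₗ.[ℂ] H) (hc : T.IsClosed) {v u : WithLp 2 (H × H)}
    (hu : u ∈ graphSub T) (ho : ∀ w ∈ graphSub T, (inner ℂ (v - u) w : ℂ) = 0) :
    projQ T hc v = u := by
  haveI : CompleteSpace (graphSub T) := (graphSub_isClosed T hc).completeSpace_coe
  exact Submodule.eq_starProjection_of_mem_of_inner_eq_zero hu ho

/-- `x ↦ (x, 0)` into `WithLp 2 (H × H)`. -/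
def emb1 : H →L[ℂ] WithLp 2 (H × H) :=
  ((WithLp.prodContinuousLinearEquiv 2 ℂ H H).symm :
    (H × H) →L[ℂ] WithLp 2 (H × H)).comp (ContinuousLinearMap.inl ℂ H H)

/-- `y ↦ (0, y)` into `WithLp 2 (H × H)`. -/
def emb2 : H →L[ℂ] WithLp 2 (H × H) :=
  ((WithLp.prodContinuousLinearEquiv 2 ℂ H H).symm :
    (H × H) →L[ℂ] WithLp 2 (H × H)).comp (ContinuousLinearMap.inr ℂ H H)

@[simp] lemma emb1_fst (x : H) : (emb1 (H := H) x).fst = x := rfl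
@[simp] lemma emb1_snd (x : H) : (emb1 (H := H) x).snd = 0 := rfl
@[simp] lemma emb2_fst (x : H) : (emb2 (H := H) x).fst = 0 := rfl
@[simp] lemma emb2_snd (x : H) : (emb2 (H := H) x).snd = x := rfl

/-- First component projection. -/
def pr1 : WithLp 2 (H × H) →L[ℂ] H :=
  (ContinuousLinearMap.fst ℂ H H).comp
    ((WithLp.prodContinuousLinearEquiv 2 ℂ H H : WithLp 2 (H × H) →L[ℂ] H × H))

/-- Second component projection. -/
def pr2 : WithLp 2 (H × H) →L[ℂ] H :=
  (ContinuousLinearMap.snd ℂ H H).comp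
    ((WithLp.prodContinuousLinearEquiv 2 ℂ H H : WithLp 2 (H × H) →L[ℂ] H × H))

@[simp] lemma pr1_apply (v : WithLp 2 (H × H)) : pr1 v = v.fst := rfl
@[simp] lemma pr2_apply (v : WithLp 2 (H × H)) : pr2 v = v.snd := rfl

/-- The characteristic matrix of a closed operator. -/
def Pmat (T : H →ₗ.[ℂ] H) (hc : T.IsClosed) : Fin 2 → Fin 2 → (H →L[ℂ] H) :=
  ![![pr1.comp ((projQ T hc).comp emb1), pr1.comp ((projQ T hc).comp emb2)],
    ![pr2.comp ((projQ T hc).comp emb1), pr2.comp ((projQ T hc).comp emb2)]]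

lemma Pmat_00 (T : H →ₗ.[ℂ] H) (hc : T.IsClosed) (x : H) :
    Pmat T hc 0 0 x = (projQ T hc (emb1 x)).fst := rfl
lemma Pmat_01 (T : H →ₗ.[ℂ] H) (hc : T.IsClosed) (x : H) :
    Pmat T hc 0 1 x = (projQ T hc (emb2 x)).fst := rfl
lemma Pmat_10 (T : H →ₗ.[ℂ] H) (hc : T.IsClosed) (x : H) :
    Pmat T hc 1 0 x = (projQ T hc (emb1 x)).snd := rfl
lemma Pmat_11 (T : H →ₗ.[ℂ] H) (hc : T.IsClosed) (x : H) :
    Pmat T hc 1 1 x = (projQ T hc (emb2 x)).snd := rfl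

lemma graph_val {T : H →ₗ.[ℂ] H} {x y : H} (hxy : (x, y) ∈ T.graph) (hx : x ∈ T.domain) :
    T ⟨x, hx⟩ = y := by
  rcases T.mem_graph_iff.mp hxy with ⟨z, hz1, hz2⟩
  have : (⟨x, hx⟩ : T.domain) = z := Subtype.ext hz1.symm
  rw [this, hz2]

lemma projQ_fst_mem (T : H →ₗ.[ℂ] H) (hc : T.IsClosed) (v : WithLp 2 (H × H)) :
    (projQ T hc v).fst ∈ T.domain :=
  LinearPMap.mem_domain_of_mem_graph (mem_graphSub.mp (projQ_mem T hc v))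

lemma projQ_val (T : H →ₗ.[ℂ] H) (hc : T.IsClosed) (v : WithLp 2 (H × H)) :
    T ⟨(projQ T hc v).fst, projQ_fst_mem T hc v⟩ = (projQ T hc v).snd :=
  graph_val (mem_graphSub.mp (projQ_mem T hc v)) _

lemma projQ_orth (T : H →ₗ.[ℂ] H) (hc : T.IsClosed) (v : WithLp 2 (H × H)) (u : T.domain) :
    (inner ℂ (v.fst - (projQ T hc v).fst) (u : H) : ℂ)
      + inner ℂ (v.snd - (projQ T hc v).snd) (T u) = 0 := by
  have hw : ((WithLp.equiv 2 (H × H)).symm ((u : H), T u)) ∈ graphSub T := by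
    rw [mem_graphSub]
    simpa using T.mem_graph u
  have h := projQ_inner T hc v _ hw
  simp [WithLp.prod_inner_apply, WithLp.sub_fst, WithLp.sub_snd, inner_sub_left] at h ⊢
  linear_combination h

lemma isCharMatrix_Pmat (T : H →ₗ.[ℂ] H) (hc : T.IsClosed) : IsCharMatrix T (Pmat T hc) := by
  have hQ : ∀ x y : H,
      projQ T hc (emb1 x + emb2 y) = projQ T hc (emb1 x) + projQ T hc (emb2 y) :=
    fun x y => map_add _ _ _
  constructor
  · intro x y
    have hmem := mem_graphSub.mp (projQ_mem T hc (emb1 x + emb2 y))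
    rw [hQ] at hmem
    simpa [Pmat_00, Pmat_01, Pmat_10, Pmat_11, WithLp.add_fst, WithLp.add_snd] using hmem
  · intro x y u
    have horth := projQ_orth T hc (emb1 x + emb2 y) u
    rw [hQ] at horth
    simpa [Pmat_00, Pmat_01, Pmat_10, Pmat_11, WithLp.add_fst, WithLp.add_snd] using horth

lemma projQ_fst_inner (T : H →ₗ.[ℂ] H) (hc : T.IsClosed) (hd : Dense (T.domain : Set H))
    {B C : H →L[ℂ] H} (hB : IsInvTstarTAddI T B) (hC : IsTComp T B C)
    (v : WithLp 2 (H × H)) (h : H) :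
    (inner ℂ (projQ T hc v).fst h : ℂ) = inner ℂ v.fst (B h) + inner ℂ v.snd (C h) := by
  obtain ⟨h1, h2, hBh⟩ := hB h
  obtain ⟨h1', hCh⟩ := hC h
  have hTBh : T ⟨B h, h1⟩ = C h := by
    rw [show (⟨B h, h1⟩ : T.domain) = ⟨B h, h1'⟩ from rfl, hCh]
  have horth' : (inner ℂ (v.fst - (projQ T hc v).fst) (B h) : ℂ)
      + inner ℂ (v.snd - (projQ T hc v).snd) (C h) = 0 := by
    have horth := projQ_orth T hc v ⟨B h, h1⟩
    rw [show T ⟨B h, h1⟩ = C h from hTBh] at horth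
    exact horth
  have hadj := (LinearPMap.adjoint_isFormalAdjoint hd) ⟨T ⟨B h, h1⟩, h2⟩
      ⟨(projQ T hc v).fst, projQ_fst_mem T hc v⟩
  rw [projQ_val] at hadj
  have hval : T.adjoint ⟨T ⟨B h, h1⟩, h2⟩ = h - B h := eq_sub_of_add_eq hBh
  rw [hval] at hadj
  have hadj2 : (inner ℂ (h - B h) ((projQ T hc v).fst) : ℂ)
      = inner ℂ (C h) ((projQ T hc v).snd) := by
    simpa [hTBh, inner_sub_left] using hadj
  have h3 : (inner ℂ ((projQ T hc v).fst) (h - B h) : ℂ)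
      = inner ℂ ((projQ T hc v).snd) (C h) := by
    rw [← inner_conj_symm ((projQ T hc v).fst), hadj2, inner_conj_symm]
  have h4 : (inner ℂ ((projQ T hc v).snd) (C h) : ℂ)
      = inner ℂ ((projQ T hc v).fst) h - inner ℂ ((projQ T hc v).fst) (B h) := by
    rw [← h3, inner_sub_right]
  rw [inner_sub_left, inner_sub_left, h4] at horth'
  linear_combination -horth'

lemma projQ_emb2_snd (T : H →ₗ.[ℂ] H) (hc : T.IsClosed) (hd : Dense (T.domain : Set H))
    {D : H →L[ℂ] H} (hD : IsInvTTstarAddI T D) (k : H) :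
    (projQ T hc (emb2 k)).snd = k - D k := by
  obtain ⟨h1, h2, hDk⟩ := hD k
  have hval : T ⟨T.adjoint ⟨D k, h1⟩, h2⟩ = k - D k := eq_sub_of_add_eq hDk
  have hu : ((WithLp.equiv 2 (H × H)).symm (T.adjoint ⟨D k, h1⟩, k - D k)) ∈ graphSub T := by
    rw [mem_graphSub]
    simp only [WithLp.equiv_symm_apply, WithLp.toLp_fst, WithLp.toLp_snd]
    rw [← hval]
    exact T.mem_graph ⟨_, h2⟩
  have ho : ∀ w ∈ graphSub T,
      (inner ℂ (emb2 k - (WithLp.equiv 2 (H × H)).symm (T.adjoint ⟨D k, h1⟩, k - D k)) w : ℂ)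
        = 0 := by
    intro w hw
    rw [mem_graphSub] at hw
    have hwd : w.fst ∈ T.domain := LinearPMap.mem_domain_of_mem_graph hw
    have hwv : T ⟨w.fst, hwd⟩ = w.snd := graph_val hw hwd
    have hadj := (LinearPMap.adjoint_isFormalAdjoint hd) ⟨D k, h1⟩ ⟨w.fst, hwd⟩
    rw [hwv] at hadj
    simp only [WithLp.prod_inner_apply, WithLp.ofLp_fst, WithLp.ofLp_snd, WithLp.sub_fst, WithLp.sub_snd, emb2_fst, emb2_snd,
      WithLp.equiv_symm_apply, WithLp.toLp_fst, WithLp.toLp_snd, sub_sub_cancel, zero_sub, inner_neg_left]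
    rw [hadj]
    ring
  have heq := projQ_eq T hc hu ho
  rw [heq]
  simp

end Stmt1Aux

/-- If `{T t}`, `{B t = (T t⋆ T t + I)⁻¹}` and `{C t = T t • B t}` are weakly
measurable, then `{T t}` is N-measurable; in particular any family
`{D t = (T t T t⋆ + I)⁻¹}` is weakly measurable. -/
theorem stmt_1 {H : Type*} [NormedAddCommGroup H] [InnerProductSpace ℂ H]
    [CompleteSpace H] [TopologicalSpace.SeparableSpace H]
    (T : ℝ → (H →ₗ.[ℂ] H))
    (hdense : ∀ t, Dense ((T t).domain : Set H)) (hclosed : ∀ t, (T t).IsClosed)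
    (B C : ℝ → (H →L[ℂ] H))
    (hB : ∀ t, IsInvTstarTAddI (T t) (B t))
    (hC : ∀ t, IsTComp (T t) (B t) (C t))
    (hTmeas : WeakMeasFam T) (hBmeas : WeakMeasOp B) (hCmeas : WeakMeasOp C) :
    NMeas T ∧
      ∀ D : ℝ → (H →L[ℂ] H), (∀ t, IsInvTTstarAddI (T t) (D t)) → WeakMeasOp D := by
  have hm00 : ∀ x h : H,
      AEMeasurable (fun t : ℝ => (inner ℂ h (Pmat (T t) (hclosed t) 0 0 x) : ℂ)) volume := by
    intro x h
    have heq : ∀ t : ℝ, (inner ℂ h (Pmat (T t) (hclosed t) 0 0 x) : ℂ)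
        = (starRingEnd ℂ) (inner ℂ x (B t h)) := by
      intro t
      rw [Pmat_00, ← inner_conj_symm]
      congr 1
      have := projQ_fst_inner (T t) (hclosed t) (hdense t) (hB t) (hC t) (emb1 x) h
      simpa using this
    simp only [heq]
    exact RCLike.continuous_conj.measurable.comp_aemeasurable (hBmeas x h)
  have hm01 : ∀ x h : H,
      AEMeasurable (fun t : ℝ => (inner ℂ h (Pmat (T t) (hclosed t) 0 1 x) : ℂ)) volume := by
    intro x h
    have heq : ∀ t : ℝ, (inner ℂ h (Pmat (T t) (hclosed t) 0 1 x) : ℂ)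
        = (starRingEnd ℂ) (inner ℂ x (C t h)) := by
      intro t
      rw [Pmat_01, ← inner_conj_symm]
      congr 1
      have := projQ_fst_inner (T t) (hclosed t) (hdense t) (hB t) (hC t) (emb2 x) h
      simpa using this
    simp only [heq]
    exact RCLike.continuous_conj.measurable.comp_aemeasurable (hCmeas x h)
  have hm10 : ∀ x h : H,
      AEMeasurable (fun t : ℝ => (inner ℂ h (Pmat (T t) (hclosed t) 1 0 x) : ℂ)) volume := by
    intro x
    have hvec : WeakMeasVec (fun t : ℝ =>
        ((⟨(projQ (T t) (hclosed t) (emb1 x)).fst,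
          projQ_fst_mem (T t) (hclosed t) (emb1 x)⟩ : (T t).domain) : H)) :=
      fun h => hm00 x h
    have hfam := hTmeas (fun t => ⟨(projQ (T t) (hclosed t) (emb1 x)).fst,
      projQ_fst_mem (T t) (hclosed t) (emb1 x)⟩) hvec
    intro h
    have hh := hfam h
    have heq : ∀ t : ℝ, T t (⟨(projQ (T t) (hclosed t) (emb1 x)).fst,
        projQ_fst_mem (T t) (hclosed t) (emb1 x)⟩ : (T t).domain)
        = Pmat (T t) (hclosed t) 1 0 x := by
      intro t
      rw [projQ_val, Pmat_10]
    simp only [heq] at hh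
    exact hh
  have hm11 : ∀ x h : H,
      AEMeasurable (fun t : ℝ => (inner ℂ h (Pmat (T t) (hclosed t) 1 1 x) : ℂ)) volume := by
    intro x
    have hvec : WeakMeasVec (fun t : ℝ =>
        ((⟨(projQ (T t) (hclosed t) (emb2 x)).fst,
          projQ_fst_mem (T t) (hclosed t) (emb2 x)⟩ : (T t).domain) : H)) :=
      fun h => hm01 x h
    have hfam := hTmeas (fun t => ⟨(projQ (T t) (hclosed t) (emb2 x)).fst,
      projQ_fst_mem (T t) (hclosed t) (emb2 x)⟩) hvec
    intro h
    have hh := hfam h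
    have heq : ∀ t : ℝ, T t (⟨(projQ (T t) (hclosed t) (emb2 x)).fst,
        projQ_fst_mem (T t) (hclosed t) (emb2 x)⟩ : (T t).domain)
        = Pmat (T t) (hclosed t) 1 1 x := by
      intro t
      rw [projQ_val, Pmat_11]
    simp only [heq] at hh
    exact hh
  refine ⟨⟨fun t => Pmat (T t) (hclosed t), fun t => isCharMatrix_Pmat _ _, ?_⟩, ?_⟩
  · intro j k
    fin_cases j <;> fin_cases k
    · exact fun h x => hm00 x h
    · exact fun h x => hm01 x h
    · exact fun h x => hm10 x h
    · exact fun h x => hm11 x h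
  · intro D hD h k
    have heq : ∀ t : ℝ, (inner ℂ h (D t k) : ℂ)
        = inner ℂ h k - inner ℂ h (Pmat (T t) (hclosed t) 1 1 k) := by
      intro t
      rw [Pmat_11, projQ_emb2_snd (T t) (hclosed t) (hdense t) (hD t) k, inner_sub_right]
      ring
    simp only [heq]
    exact aemeasurable_const.sub (hm11 k h)

end
end

section
/- Let H be a separable complex Hilbert space and let {T(t)}_{t∈ℝ} be a family of self-adjoint operators in H that is N-measurable. Then for every z ∈ ℂ∖ℝ the family of resolvents {(T(t) − zI)^{−1}}_{t∈ℝ} is weakly measurable, i.e., t ↦ ⟨h, (T(t) − zI)^{−1} k⟩_H is Lebesgue measurable for all h, k ∈ H. -/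
open MeasureTheory

noncomputable section

variable {H : Type*} [NormedAddCommGroup H] [InnerProductSpace ℂ H]

/- Auxiliary development -/

local notation "⟪" x ", " y "⟫" => @inner ℂ _ _ x y

lemma exists_countable_hilbertBasis [CompleteSpace H] [TopologicalSpace.SeparableSpace H] :
    ∃ (w : Set H) (_b : HilbertBasis w ℂ H), w.Countable := by
  obtain ⟨w, b, hb⟩ := exists_hilbertBasis ℂ H
  refine ⟨w, b, ?_⟩
  obtain ⟨D, Dcount, Ddense⟩ := TopologicalSpace.exists_countable_dense H
  have horth : Orthonormal ℂ ((↑) : w → H) := hb ▸ b.orthonormal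
  have hch : ∀ e : w, ∃ d : D, dist (e : H) (d : H) < 1/2 := by
    intro e
    have := Metric.dense_iff.mp Ddense (e : H) (1/2) (by norm_num)
    obtain ⟨d, hd1, hd2⟩ := this
    exact ⟨⟨d, hd2⟩, by rwa [Metric.mem_ball, dist_comm] at hd1⟩
  choose f hf using hch
  have hinj : Function.Injective f := by
    intro e e' hee
    by_contra hne
    have h2 : ‖(e : H) - (e' : H)‖ ^ 2 = 2 := by
      rw [@norm_sub_sq ℂ, horth.2 hne]
      simp [horth.1 e, horth.1 e']
      norm_num
    have hlt : ‖(e : H) - (e' : H)‖ < 1 := by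
      have h1 := hf e
      have h2' := hf e'
      rw [hee] at h1
      calc ‖(e : H) - (e' : H)‖ ≤ dist (e : H) (f e' : H) + dist (f e' : H) (e' : H) := by
            rw [← dist_eq_norm]; exact dist_triangle _ _ _
        _ < 1/2 + 1/2 := add_lt_add h1 (by rw [dist_comm]; exact h2')
        _ = 1 := by norm_num
    nlinarith [norm_nonneg ((e : H) - (e' : H))]
  have : Countable D := Dcount.to_subtype
  have : Countable w := Function.Injective.countable hinj
  exact Set.countable_coe_iff.mp this

lemma aemeasurable_of_hasSum {ι : Type*} [Countable ι] {F : ι → ℝ → ℂ} {g : ℝ → ℂ}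
    (hF : ∀ i, AEMeasurable (F i) volume) (h : ∀ t, HasSum (fun i => F i t) (g t)) :
    AEMeasurable g volume := by
  classical
  refine aemeasurable_of_tendsto_metrizable_ae (Filter.atTop : Filter (Finset ι))
    (fun s => ?_) (Filter.Eventually.of_forall fun t => h t)
  exact Finset.aemeasurable_fun_sum s fun i _ => hF i

lemma WeakMeasOp.comp [CompleteSpace H] [TopologicalSpace.SeparableSpace H]
    {A B : ℝ → H →L[ℂ] H} (hA : WeakMeasOp A) (hB : WeakMeasOp B) :
    WeakMeasOp (fun t => A t ∘L B t) := by
  intro h k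
  obtain ⟨w, b, hw⟩ := exists_countable_hilbertBasis (H := H)
  haveI : Countable w := hw.to_subtype
  refine aemeasurable_of_hasSum (F := fun (i : w) (t : ℝ) => ⟪h, A t (b i)⟫ * ⟪b i, B t k⟫)
    (fun i => (hA h (b i)).mul (hB (b i) k)) (fun t => ?_)
  have hsum := b.hasSum_inner_mul_inner (ContinuousLinearMap.adjoint (A t) h) (B t k)
  have he : ∀ i : w, ⟪ContinuousLinearMap.adjoint (A t) h, b i⟫ = ⟪h, A t (b i)⟫ :=
    fun i => ContinuousLinearMap.adjoint_inner_left (A t) (b i) h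
  have he2 : ⟪ContinuousLinearMap.adjoint (A t) h, B t k⟫ = ⟪h, A t (B t k)⟫ :=
    ContinuousLinearMap.adjoint_inner_left (A t) (B t k) h
  simp only [he, he2] at hsum
  exact hsum

section PMapAux
variable [CompleteSpace H]
open LinearPMap

lemma sa_symm {T : H →ₗ.[ℂ] H} (hsa : IsSelfAdjoint T) :
    ∀ u v : T.domain, ⟪(u : H), T v⟫ = ⟪T u, (v : H)⟫ := by
  have hd := hsa.dense_domain
  have heq : T.adjoint = T := hsa
  have hge : T ≤ T.adjoint := le_of_eq heq.symm
  intro u v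
  have h1 := LinearPMap.adjoint_isFormalAdjoint hd (Submodule.inclusion hge.1 u) v
  have h2 := LinearPMap.apply_comp_inclusion hge u
  have h3 : ((Submodule.inclusion hge.1 u : T.adjoint.domain) : H) = (u : H) := rfl
  rw [← h2, h3] at h1
  exact h1.symm

lemma sa_mem {T : H →ₗ.[ℂ] H} (hsa : IsSelfAdjoint T) (y w : H)
    (hyw : ∀ u : T.domain, ⟪y, T u⟫ = ⟪w, (u : H)⟫) :
    ∃ hy : y ∈ T.domain, T ⟨y, hy⟩ = w := by
  have hd := hsa.dense_domain
  have heq : T.adjoint = T := hsa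
  have hle : T.adjoint ≤ T := le_of_eq heq
  have hy' : y ∈ T.adjoint.domain :=
    mem_adjoint_domain_of_exists y ⟨w, fun u => (hyw u).symm⟩
  have happ : T.adjoint ⟨y, hy'⟩ = w :=
    adjoint_apply_eq hd ⟨y, hy'⟩ fun u => (hyw u).symm
  refine ⟨hle.1 hy', ?_⟩
  rw [← happ]
  exact (hle.2 (x := ⟨y, hy'⟩) (y := ⟨y, hle.1 hy'⟩) rfl).symm

lemma symm_norm_bound {T : H →ₗ.[ℂ] H}
    (hsymm : ∀ u v : T.domain, ⟪(u : H), T v⟫ = ⟪T u, (v : H)⟫)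
    (z : ℂ) (v : T.domain) : |z.im| * ‖(v : H)‖ ≤ ‖T v - z • (v : H)‖ := by
  set x := T v - z • (v : H) with hx
  have hreal : (⟪(v : H), T v⟫).im = 0 := by
    have h1 : (starRingEnd ℂ) ⟪(v : H), T v⟫ = ⟪(v : H), T v⟫ := by
      rw [inner_conj_symm]
      exact (hsymm v v).symm
    have := congrArg Complex.im h1
    simp only [Complex.conj_im] at this
    linarith
  have hvv : ⟪(v : H), (v : H)⟫ = (‖(v : H)‖ ^ 2 : ℝ) := by
    rw [inner_self_eq_norm_sq_to_K]; norm_cast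
  have him : (⟪(v : H), x⟫).im = -(z.im * ‖(v : H)‖ ^ 2) := by
    rw [hx, inner_sub_right, inner_smul_right, hvv]
    simp [hreal, Complex.mul_im, ← Complex.ofReal_pow]
  have h1 : |z.im| * ‖(v : H)‖ ^ 2 = |(⟪(v : H), x⟫).im| := by
    rw [him, abs_neg, abs_mul]
    congr 1
    rw [abs_of_nonneg (by positivity)]
  have h2 : |(⟪(v : H), x⟫).im| ≤ ‖⟪(v : H), x⟫‖ := Complex.abs_im_le_norm _
  have h3 : ‖⟪(v : H), x⟫‖ ≤ ‖(v : H)‖ * ‖x‖ := norm_inner_le_norm _ _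
  rcases eq_or_lt_of_le (norm_nonneg (v : H)) with hv | hv
  · rw [← hv]; simp [norm_nonneg]
  · nlinarith [abs_nonneg z.im]

lemma resolvent_unique {T : H →ₗ.[ℂ] H} {z : ℂ} {R1 R2 : H →L[ℂ] H}
    (h1 : IsResolvent T z R1) (h2 : IsResolvent T z R2) (x : H) : R1 x = R2 x := by
  obtain ⟨hx, hTx⟩ := h2.1 x
  have h3 := h1.2 ⟨R2 x, hx⟩
  rw [hTx] at h3
  exact h3

lemma isResolvent_of_first {T : H →ₗ.[ℂ] H}
    (hsymm : ∀ u v : T.domain, ⟪(u : H), T v⟫ = ⟪T u, (v : H)⟫)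
    {z : ℂ} (hz : z.im ≠ 0) {R : H →L[ℂ] H}
    (h1 : ∀ x : H, ∃ hx : R x ∈ T.domain, T ⟨R x, hx⟩ - z • R x = x) :
    IsResolvent T z R := by
  refine ⟨h1, fun y => ?_⟩
  obtain ⟨hx, hTx⟩ := h1 (T y - z • (y : H))
  set u : T.domain := ⟨R (T y - z • (y : H)), hx⟩ with hu
  have hv : T (u - y) - z • ((u - y : T.domain) : H) = 0 := by
    rw [LinearPMap.map_sub]
    have hc : ((u - y : T.domain) : H) = (u : H) - (y : H) := rfl
    rw [hc, smul_sub]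
    have heq2 : T u - z • (u : H) = T y - z • (y : H) := hTx
    have hgoal : T u - T y - (z • (u : H) - z • (y : H))
        = (T u - z • (u : H)) - (T y - z • (y : H)) := by abel
    rw [hgoal, heq2, sub_self]
  have hb := symm_norm_bound hsymm z (u - y)
  rw [hv] at hb
  simp only [norm_zero] at hb
  have habs : 0 < |z.im| := abs_pos.mpr hz
  have hnn : ‖((u - y : T.domain) : H)‖ = 0 := by nlinarith [norm_nonneg ((u - y : T.domain) : H)]
  have : ((u - y : T.domain) : H) = 0 := norm_eq_zero.mp hnn
  have hc : (u : H) - (y : H) = 0 := this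
  have : (u : H) = (y : H) := by rwa [sub_eq_zero] at hc
  exact this

end PMapAux

section GoodResSec
variable [CompleteSpace H] [TopologicalSpace.SeparableSpace H]
open LinearPMap

/-- There exists a weakly measurable family of resolvents at `z`. -/
def GoodRes (T : ℝ → (H →ₗ.[ℂ] H)) (z : ℂ) : Prop :=
  ∃ R : ℝ → H →L[ℂ] H, (∀ t, IsResolvent (T t) z (R t)) ∧ WeakMeasOp R

lemma GoodRes.step {T : ℝ → H →ₗ.[ℂ] H} (hsa : ∀ t, IsSelfAdjoint (T t)) {z₀ z : ℂ}
    (hz₀ : z₀.im ≠ 0) (hstep : ‖z - z₀‖ < |z₀.im|) (hg : GoodRes T z₀) :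
    GoodRes T z := by
  obtain ⟨R, hR, hRm⟩ := hg
  set c : ℂ := z - z₀ with hc
  have hz : z.im ≠ 0 := by
    intro h0
    have h1 : |(z - z₀).im| ≤ ‖z - z₀‖ := Complex.abs_im_le_norm _
    rw [Complex.sub_im, h0, zero_sub, abs_neg] at h1
    linarith
  have habs : 0 < |z₀.im| := abs_pos.mpr hz₀
  have hnorm : ∀ t x, |z₀.im| * ‖R t x‖ ≤ ‖x‖ := by
    intro t x
    obtain ⟨hx, hTx⟩ := (hR t).1 x
    have hb := symm_norm_bound (sa_symm (hsa t)) z₀ (⟨R t x, hx⟩ : (T t).domain)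
    rw [hTx] at hb
    exact hb
  have hcR : ∀ t, ‖c • R t‖ < 1 := by
    intro t
    have hRn : ‖R t‖ ≤ |z₀.im|⁻¹ := by
      refine ContinuousLinearMap.opNorm_le_bound _ (by positivity) fun x => ?_
      rw [inv_mul_eq_div, le_div_iff₀ habs, mul_comm]
      exact hnorm t x
    have hlt : ‖c‖ < |z₀.im| := by exact hstep
    calc ‖c • R t‖ ≤ ‖c‖ * ‖R t‖ := norm_smul_le _ _
      _ ≤ ‖c‖ * |z₀.im|⁻¹ := mul_le_mul_of_nonneg_left hRn (norm_nonneg c)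
      _ < |z₀.im| * |z₀.im|⁻¹ :=
          mul_lt_mul_of_pos_right hlt (inv_pos.mpr habs)
      _ = 1 := mul_inv_cancel₀ (ne_of_gt habs)
  let u : ∀ t : ℝ, (H →L[ℂ] H)ˣ := fun t => Units.oneSub (c • R t) (hcR t)
  let W : ℝ → H →L[ℂ] H := fun t => ↑(u t)⁻¹
  refine ⟨fun t => R t ∘L W t, fun t => ?_, ?_⟩
  · apply isResolvent_of_first (sa_symm (hsa t)) hz
    intro x
    obtain ⟨hx, hTx⟩ := (hR t).1 (W t x)
    refine ⟨hx, ?_⟩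
    have h1 : T t ⟨R t (W t x), hx⟩ = W t x + z₀ • R t (W t x) :=
      sub_eq_iff_eq_add.mp hTx
    show T t ⟨R t (W t x), hx⟩ - z • R t (W t x) = x
    rw [h1]
    have h3 : ((1 : H →L[ℂ] H) - c • R t) * W t = 1 := (u t).mul_inv
    have h2 : W t x - c • (R t (W t x)) = x := by
      have h4 : (((1 : H →L[ℂ] H) - c • R t) * W t) x = x := by rw [h3]; rfl
      simpa [ContinuousLinearMap.mul_apply, ContinuousLinearMap.sub_apply,
        ContinuousLinearMap.smul_apply, ContinuousLinearMap.one_apply] using h4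
    calc W t x + z₀ • R t (W t x) - z • R t (W t x)
        = W t x - (z - z₀) • (R t (W t x)) := by rw [sub_smul]; abel
      _ = x := h2
  · have hcmeas : WeakMeasOp (fun t => c • R t) := by
      intro h k
      simp only [ContinuousLinearMap.smul_apply, inner_smul_right]
      exact (hRm h k).const_mul c
    have hpow : ∀ n : ℕ, WeakMeasOp (fun t => (c • R t) ^ n) := by
      intro n
      induction n with
      | zero =>
          intro h k
          simp only [pow_zero, ContinuousLinearMap.one_apply]
          exact aemeasurable_const
      | succ n ih =>
          intro h k
          have := (WeakMeasOp.comp ih hcmeas) h k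
          have heq : (fun t => ⟪h, (((c • R t) ^ n) ∘L (c • R t)) k⟫)
              = fun t => ⟪h, ((c • R t) ^ (n+1)) k⟫ := by
            funext t
            rw [pow_succ]
            rfl
          rwa [heq] at this
    have hW : WeakMeasOp W := by
      intro h k
      refine aemeasurable_of_hasSum (F := fun (n : ℕ) (t : ℝ) => ⟪h, ((c • R t) ^ n) k⟫)
        (fun n => hpow n h k) (fun t => ?_)
      have hs : HasSum (fun n : ℕ => (c • R t) ^ n) (W t) :=
        (summable_geometric_of_norm_lt_one (hcR t)).hasSum
      have := hs.mapL ((innerSL ℂ h).comp (ContinuousLinearMap.apply ℂ H k))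
      simpa using this
    exact WeakMeasOp.comp hRm hW

lemma goodres_base {T : ℝ → H →ₗ.[ℂ] H} (hsa : ∀ t, IsSelfAdjoint (T t)) (hN : NMeas T)
    (e : ℝ) (he : e = 1 ∨ e = -1) : GoodRes T ((e : ℂ) * Complex.I) := by
  obtain ⟨P, hP, hPm⟩ := hN
  set z : ℂ := (e : ℂ) * Complex.I with hzdef
  have hzim : z.im ≠ 0 := by
    have : z.im = e := by simp [hzdef]
    rw [this]
    rcases he with h | h <;> rw [h] <;> norm_num
  refine ⟨fun t => P t 1 0 + z • P t 0 0, fun t => ?_, ?_⟩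
  · apply isResolvent_of_first (sa_symm (hsa t)) hzim
    intro x
    -- graph membership of (P00 x, P10 x)
    have hg := (hP t).1 x 0
    simp only [_root_.map_zero, add_zero] at hg
    rw [LinearPMap.mem_graph_iff] at hg
    obtain ⟨y, hy0, hy0'⟩ := hg
    have hy1 : (y : H) = P t 0 0 x := hy0
    have hy2 : T t y = P t 1 0 x := hy0'

    -- orthogonality relation
    have hb : ∀ u : (T t).domain, ⟪P t 1 0 x, T t u⟫ = ⟪x - P t 0 0 x, (u : H)⟫ := by
      intro u
      have h2 := (hP t).2 x 0 u
      simp only [_root_.map_zero, add_zero, zero_sub] at h2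
      rw [inner_neg_left] at h2
      linear_combination -h2
    obtain ⟨hbmem, hbT⟩ := sa_mem (hsa t) (P t 1 0 x) (x - P t 0 0 x) hb
    have hamem : P t 0 0 x ∈ (T t).domain := hy1 ▸ y.2
    set a : (T t).domain := ⟨P t 0 0 x, hamem⟩ with hadef
    set b : (T t).domain := ⟨P t 1 0 x, hbmem⟩ with hbdef
    have hTa : T t a = P t 1 0 x := by
      have hay : a = y := Subtype.ext (by rw [hadef, hy1])
      rw [hay, hy2]
    have hTb : T t b = x - P t 0 0 x := hbT
    have hmemb : (P t 1 0 + z • P t 0 0) x ∈ (T t).domain := by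
      show P t 1 0 x + z • P t 0 0 x ∈ (T t).domain
      exact add_mem hbmem (Submodule.smul_mem _ z hamem)
    refine ⟨hmemb, ?_⟩
    have hsub : (⟨(P t 1 0 + z • P t 0 0) x, hmemb⟩ : (T t).domain) = b + z • a :=
      Subtype.ext (by simp [hbdef, hadef])
    rw [hsub, LinearPMap.map_add, LinearPMap.map_smul, hTa, hTb]
    have happ : (P t 1 0 + z • P t 0 0) x = P t 1 0 x + z • P t 0 0 x := rfl
    rw [happ]
    have hz2 : z * z = -1 := by
      have he2 : (e : ℂ)^2 = 1 := by rcases he with h | h <;> rw [h] <;> norm_num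
      calc z * z = (e : ℂ)^2 * (Complex.I * Complex.I) := by rw [hzdef]; ring
        _ = -1 := by rw [he2, Complex.I_mul_I]; ring
    rw [smul_add, smul_smul, hz2]
    have : (-1 : ℂ) • P t 0 0 x = -(P t 0 0 x) := by
      rw [neg_smul, one_smul]
    rw [this]
    abel
  · intro h k
    have heq : (fun t : ℝ => ⟪h, (P t 1 0 + z • P t 0 0) k⟫)
        = fun t : ℝ => ⟪h, P t 1 0 k⟫ + z * ⟪h, P t 0 0 k⟫ := by
      funext t
      simp [inner_add_right, inner_smul_right]
    rw [heq]
    exact (hPm 1 0 h k).add ((hPm 0 0 h k).const_mul z)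

lemma GoodRes.conj {T : ℝ → H →ₗ.[ℂ] H} (hsa : ∀ t, IsSelfAdjoint (T t)) {z : ℂ}
    (hz : z.im ≠ 0) (hg : GoodRes T z) : GoodRes T ((starRingEnd ℂ) z) := by
  obtain ⟨R, hR, hRm⟩ := hg
  refine ⟨fun t => ContinuousLinearMap.adjoint (R t), fun t => ?_, ?_⟩
  · apply isResolvent_of_first (sa_symm (hsa t)) (by simpa using hz)
    intro x
    set R' : H →L[ℂ] H := ContinuousLinearMap.adjoint (R t) with hR'def
    have key : ∀ u : (T t).domain,
        ⟪R' x, T t u⟫ = ⟪x + ((starRingEnd ℂ) z) • R' x, (u : H)⟫ := by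
      intro u
      have h1 : ⟪R' x, T t u⟫ = ⟪x, R t (T t u)⟫ :=
        ContinuousLinearMap.adjoint_inner_left (R t) (T t u) x
      have h2 : R t (T t u) = (u : H) + z • R t (u : H) := by
        have h3 := (hR t).2 u
        have h4 : R t (T t u) - z • R t (u : H) = (u : H) := by
          rw [_root_.map_sub, _root_.map_smul] at h3
          exact h3
        exact sub_eq_iff_eq_add.mp h4
      have h5 : ⟪x, R t (u : H)⟫ = ⟪R' x, (u : H)⟫ :=
        (ContinuousLinearMap.adjoint_inner_left (R t) (u : H) x).symm
      rw [h1, h2, inner_add_right, inner_smul_right, h5, inner_add_left, inner_smul_left]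
      simp
    obtain ⟨hy, hTy⟩ := sa_mem (hsa t) (R' x) (x + ((starRingEnd ℂ) z) • R' x) key
    refine ⟨hy, ?_⟩
    rw [hTy]
    abel
  · intro h k
    have heq : (fun t : ℝ => ⟪h, ContinuousLinearMap.adjoint (R t) k⟫)
        = fun t : ℝ => (starRingEnd ℂ) ⟪k, R t h⟫ := by
      funext t
      rw [ContinuousLinearMap.adjoint_inner_right, ← inner_conj_symm]
    rw [heq]
    exact (Complex.continuous_conj.measurable.comp_aemeasurable (hRm k h))

lemma goodres_offreal {T : ℝ → H →ₗ.[ℂ] H} (hsa : ∀ t, IsSelfAdjoint (T t)) (hN : NMeas T) :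
    ∀ z : ℂ, z.im ≠ 0 → GoodRes T z := by
  have imMul : ∀ b : ℝ, ((b : ℂ) * Complex.I).im = b := by
    intro b; simp
  have absR : ∀ b : ℝ, ‖(b : ℂ) * Complex.I‖ = |b| := by
    intro b; simp
  -- vertical lemma for either sign `e`
  have vert : ∀ e : ℝ, e = 1 ∨ e = -1 → ∀ b : ℝ, 0 < b →
      GoodRes T ((e * b : ℝ) * Complex.I) := by
    intro e he b hb
    have habse : |e| = 1 := by rcases he with h | h <;> rw [h] <;> norm_num
    have base : GoodRes T ((e : ℂ) * Complex.I) := goodres_base hsa hN e he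
    have pow32 : ∀ n : ℕ, GoodRes T ((e * (3/2 : ℝ)^n : ℝ) * Complex.I) := by
      intro n
      induction n with
      | zero => simpa using base
      | succ n ih =>
          have hpos : (0:ℝ) < (3/2 : ℝ)^n := by positivity
          refine GoodRes.step hsa (z₀ := ((e * (3/2:ℝ)^n : ℝ) : ℂ) * Complex.I) ?_ ?_ ih
          · rw [imMul]
            intro h0
            rcases he with h | h <;> rw [h] at h0 <;> nlinarith
          · have hsub : ((e * (3/2:ℝ)^(n+1) : ℝ) : ℂ) * Complex.I
                - ((e * (3/2:ℝ)^n : ℝ) : ℂ) * Complex.I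
                = ((e * (3/2:ℝ)^n * (1/2) : ℝ) : ℂ) * Complex.I := by
              push_cast
              ring
            rw [hsub, absR, imMul]
            rw [abs_mul, abs_mul, habse, one_mul, abs_of_pos hpos]
            rw [abs_of_pos (by norm_num : (0:ℝ) < 1/2)]
            nlinarith
    obtain ⟨n, hn⟩ := pow_unbounded_of_one_lt b (by norm_num : (1:ℝ) < 3/2)
    have hpos : (0:ℝ) < (3/2 : ℝ)^n := by positivity
    refine GoodRes.step hsa (z₀ := ((e * (3/2:ℝ)^n : ℝ) : ℂ) * Complex.I) ?_ ?_ (pow32 n)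
    · rw [imMul]
      intro h0
      rcases he with h | h <;> rw [h] at h0 <;> nlinarith
    · have hsub : ((e * b : ℝ) : ℂ) * Complex.I - ((e * (3/2:ℝ)^n : ℝ) : ℂ) * Complex.I
          = ((e * (b - (3/2:ℝ)^n) : ℝ) : ℂ) * Complex.I := by
        push_cast
        ring
      rw [hsub, absR, imMul, abs_mul, abs_mul, habse, one_mul, abs_of_pos hpos]
      rw [abs_of_neg (by linarith : b - (3/2:ℝ)^n < 0)]
      linarith
  -- horizontal steps
  have horiz : ∀ n : ℕ, ∀ a b : ℝ, b ≠ 0 → |a| ≤ n * (|b|/2) →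
      GoodRes T ((a : ℂ) + (b : ℂ) * Complex.I) := by
    intro n
    induction n with
    | zero =>
        intro a b hb ha
        have ha0 : a = 0 := by
          simp only [Nat.cast_zero, zero_mul] at ha
          exact abs_eq_zero.mp (le_antisymm ha (abs_nonneg a))
        subst ha0
        rcases lt_or_gt_of_ne hb with hbneg | hbpos
        · have := vert (-1) (Or.inr rfl) (-b) (by linarith)
          simpa using this
        · have := vert 1 (Or.inl rfl) b hbpos
          simpa using this
    | succ n ih =>
        intro a b hb ha
        by_cases hcase : |a| ≤ n * (|b|/2)
        · exact ih a b hb hcase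
        · have habs : 0 < |b| := abs_pos.mpr hb
          set a' : ℝ := a * n / (n+1) with ha'
          have hn1 : (0:ℝ) < n + 1 := by positivity
          have h1 : |a'| ≤ n * (|b|/2) := by
            rw [ha', abs_div, abs_mul, Nat.abs_cast, abs_of_pos hn1]
            rw [div_le_iff₀ hn1]
            push_cast at ha ⊢
            nlinarith [abs_nonneg a]
          have h2 : |a - a'| < |b| := by
            have hd : a - a' = a / (n+1) := by
              rw [ha']
              field_simp
              ring
            rw [hd, abs_div, abs_of_pos hn1, div_lt_iff₀ hn1]
            push_cast at ha ⊢
            nlinarith [abs_nonneg a]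
          refine GoodRes.step hsa (z₀ := (a' : ℂ) + (b : ℂ) * Complex.I) ?_ ?_ (ih a' b hb h1)
          · simp [hb]
          · have hsub : ((a : ℂ) + (b : ℂ) * Complex.I) - ((a' : ℂ) + (b : ℂ) * Complex.I)
                = ((a - a' : ℝ) : ℂ) := by push_cast; ring
            rw [hsub]
            have him : ((a' : ℂ) + (b : ℂ) * Complex.I).im = b := by simp
            rw [him, Complex.norm_real, Real.norm_eq_abs]
            exact h2
  intro z hz
  obtain ⟨n, hn⟩ := exists_nat_ge (|z.re| / (|z.im|/2))
  have habs : 0 < |z.im| := abs_pos.mpr hz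
  have hre : |z.re| ≤ n * (|z.im|/2) := by
    rw [div_le_iff₀ (by positivity : (0:ℝ) < |z.im|/2)] at hn
    linarith
  have := horiz n z.re z.im hz hre
  simpa [Complex.re_add_im] using this

end GoodResSec

/-- For an N-measurable family of self-adjoint operators, all resolvent families
at non-real `z` are weakly measurable. -/
theorem stmt_3 {H : Type*} [NormedAddCommGroup H] [InnerProductSpace ℂ H]
    [CompleteSpace H] [TopologicalSpace.SeparableSpace H]
    (T : ℝ → (H →ₗ.[ℂ] H))
    (hdense : ∀ t, Dense ((T t).domain : Set H))
    (hsa : ∀ t, IsSelfAdjoint (T t))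
    (hN : NMeas T) :
    ∀ z : ℂ, z.im ≠ 0 → ∀ R : ℝ → (H →L[ℂ] H),
      (∀ t, IsResolvent (T t) z (R t)) → WeakMeasOp R := by
  intro z hz R hR
  obtain ⟨R', hR', hm⟩ := goodres_offreal hsa hN z hz
  intro h k
  have heq : (fun t : ℝ => (inner ℂ h (R t k) : ℂ)) = fun t : ℝ => (inner ℂ h (R' t k) : ℂ) := by
    funext t
    rw [resolvent_unique (hR t) (hR' t) k]
  rw [heq]
  exact hm h k

end
end

section
/- Let H be a separable complex Hilbert space, and for each t ∈ ℝ and n ∈ ℕ let T(t) and Tₙ(t) be self-adjoint operators in H. Suppose that for each n ∈ ℕ the family {Tₙ(t)}_{t∈ℝ} is N-measurable, and that for a.e. t ∈ ℝ the operators Tₙ(t) converge to T(t) in the weak resolvent sense, i.e., for every z ∈ ℂ∖ℝ and all f, g ∈ H, ⟨f, (Tₙ(t) − zI)^{−1} g⟩_H → ⟨f, (T(t) − zI)^{−1} g⟩_H as n → ∞. Then the family {T(t)}_{t∈ℝ} is N-measurable. -/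
open MeasureTheory

noncomputable section

variable {H : Type*} [NormedAddCommGroup H] [InnerProductSpace ℂ H]

set_option linter.unusedSectionVars false

namespace Stmt4Aux

open Complex LinearPMap

variable {E : Type*} [NormedAddCommGroup E] [InnerProductSpace ℂ E] [CompleteSpace E]

local notation "⟪" x ", " y "⟫" => @inner ℂ _ _ x y

lemma mem_graph_pmap {T : E →ₗ.[ℂ] E} {a b : E} (h : (a, b) ∈ T.graph) :
    ∃ ha : a ∈ T.domain, T ⟨a, ha⟩ = b := by
  rcases T.mem_graph_iff.mp h with ⟨y, hy1, hy2⟩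
  have hy1' : (y : E) = a := hy1
  have ha : a ∈ T.domain := hy1' ▸ y.2
  refine ⟨ha, ?_⟩
  have hy : (⟨a, ha⟩ : T.domain) = y := Subtype.ext hy1'.symm
  rw [hy]; exact hy2

lemma mem_graph_iff_inner {T : E →ₗ.[ℂ] E} (hsa : IsSelfAdjoint T) {p : E × E} :
    p ∈ T.graph ↔ ∀ v : T.domain, ⟪p.2, (v : E)⟫ = ⟪p.1, T v⟫ := by
  have hd : Dense (T.domain : Set E) := hsa.dense_domain
  have heq : T.adjoint = T := LinearPMap.isSelfAdjoint_def.mp hsa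
  constructor
  · intro hmem v
    rw [← heq] at hmem
    rcases T.adjoint.mem_graph_iff.mp hmem with ⟨y, hy1, hy2⟩
    rw [← hy2, ← hy1]
    exact adjoint_isFormalAdjoint hd y v
  · intro hv
    have ha : p.1 ∈ T.adjoint.domain :=
      mem_adjoint_domain_of_exists p.1 ⟨p.2, fun u => hv u⟩
    have hb : T.adjoint ⟨p.1, ha⟩ = p.2 := adjoint_apply_eq hd _ fun u => hv u
    have h3 := T.adjoint.mem_graph ⟨p.1, ha⟩
    rw [hb] at h3
    have hg : T.adjoint.graph = T.graph := congrArg LinearPMap.graph heq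
    rw [hg] at h3
    simpa using h3

lemma inner_symm {T : E →ₗ.[ℂ] E} (hsa : IsSelfAdjoint T) (u v : T.domain) :
    ⟪T u, (v : E)⟫ = ⟪(u : E), T v⟫ :=
  (mem_graph_iff_inner hsa).mp (T.mem_graph u) v

lemma graph_isClosed {T : E →ₗ.[ℂ] E} (hsa : IsSelfAdjoint T) :
    IsClosed (T.graph : Set (E × E)) := by
  have : (T.graph : Set (E × E)) =
      ⋂ v : T.domain, {p : E × E | ⟪p.2, (v : E)⟫ - ⟪p.1, T v⟫ = 0} := by
    ext p
    simp only [Set.mem_iInter, Set.mem_setOf_eq, sub_eq_zero, SetLike.mem_coe]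
    exact mem_graph_iff_inner hsa
  rw [this]
  exact isClosed_iInter fun v => isClosed_eq
    ((continuous_snd.inner continuous_const).sub (continuous_fst.inner continuous_const))
    continuous_const

lemma eigen_zero {T : E →ₗ.[ℂ] E} (hsa : IsSelfAdjoint T) {z : ℂ} (hz : z.im ≠ 0)
    (w : T.domain) (hw : T w = z • (w : E)) : (w : E) = 0 := by
  have h1 : ⟪T w, (w : E)⟫ = ⟪(w : E), T w⟫ := inner_symm hsa w w
  rw [hw, inner_smul_left, inner_smul_right] at h1
  have h2 : ((starRingEnd ℂ) z - z) * ⟪(w : E), (w : E)⟫ = 0 := by ring_nf; linear_combination h1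
  rcases mul_eq_zero.mp h2 with h | h
  · exfalso
    apply hz
    have h4 := sub_eq_zero.mp h
    have h5 : -z.im = z.im := by simpa using congrArg Complex.im h4
    linarith
  · exact inner_self_eq_zero.mp h




lemma isResolvent_mk {T : E →ₗ.[ℂ] E} (hsa : IsSelfAdjoint T) {B C : E →L[ℂ] E}
    (hBC : ∀ x, ∃ h : B x ∈ T.domain, T ⟨B x, h⟩ = C x)
    (hCB : ∀ x, ∃ h : C x ∈ T.domain, T ⟨C x, h⟩ = x - B x)
    {z : ℂ} (hz : z.im ≠ 0) (hz2 : z * z = -1) :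
    IsResolvent T z (C + z • B) := by
  have main : ∀ x : E, ∃ hx : (C + z • B) x ∈ T.domain,
      T ⟨(C + z • B) x, hx⟩ - z • (C + z • B) x = x := by
    intro x
    obtain ⟨h1, e1⟩ := hBC x
    obtain ⟨h2, e2⟩ := hCB x
    have happ : (C + z • B) x = C x + z • B x := rfl
    have hmem : (C + z • B) x ∈ T.domain := by
      rw [happ]; exact T.domain.add_mem h2 (T.domain.smul_mem z h1)
    refine ⟨hmem, ?_⟩
    have hsub : (⟨(C + z • B) x, hmem⟩ : T.domain)
        = ⟨C x, h2⟩ + z • ⟨B x, h1⟩ := by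
      apply Subtype.ext; simp [happ]
    rw [hsub, T.map_add, T.map_smul, e1, e2, happ]
    have : z • (C x + z • B x) = z • C x + (z * z) • B x := by
      rw [smul_add, smul_smul]
    rw [this, hz2]
    simp [smul_smul]
    abel
  refine ⟨main, ?_⟩
  intro y
  obtain ⟨hm, e⟩ := main (T y - z • (y : E))
  set u : T.domain := ⟨(C + z • B) (T y - z • (y : E)), hm⟩ with hu
  have hw : T (u - y) = z • ((u - y : T.domain) : E) := by
    have h1 : T u = (T y - z • (y : E)) + z • ((u : E)) := by
      have := e
      rw [sub_eq_iff_eq_add] at this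
      rw [this]
    rw [T.map_sub, h1]
    simp only [AddSubgroupClass.coe_sub, smul_sub]
    abel
  have h0 : ((u - y : T.domain) : E) = 0 := eigen_zero hsa hz _ hw
  have h0' : (u : E) - (y : E) = 0 := by simpa using h0
  have := sub_eq_zero.mp h0'
  simpa [hu] using this


lemma isResolvent_unique {T : E →ₗ.[ℂ] E} {z : ℂ} {R R' : E →L[ℂ] E}
    (h : IsResolvent T z R) (h' : IsResolvent T z R') (x : E) : R x = R' x := by
  obtain ⟨hx, e⟩ := h'.1 x
  have := h.2 ⟨R' x, hx⟩
  simp only [LinearPMap.mk_apply] at this ⊢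
  calc R x = R (T ⟨R' x, hx⟩ - z • R' x) := by rw [e]
  _ = R' x := this

lemma charMatrix_BC {T : E →ₗ.[ℂ] E} (hsa : IsSelfAdjoint T) {P : Fin 2 → Fin 2 → (E →L[ℂ] E)}
    (hP : IsCharMatrix T P) :
    (∀ x, ∃ h : P 0 0 x ∈ T.domain, T ⟨P 0 0 x, h⟩ = P 1 0 x) ∧
    (∀ x, ∃ h : P 1 0 x ∈ T.domain, T ⟨P 1 0 x, h⟩ = x - P 0 0 x) := by
  constructor
  · intro x
    have h := hP.1 x 0
    simp only [_root_.map_zero, add_zero] at h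
    exact mem_graph_pmap h
  · intro x
    apply mem_graph_pmap
    rw [mem_graph_iff_inner hsa]
    intro v
    have h := hP.2 x 0 v
    simp only [_root_.map_zero, add_zero, zero_sub, inner_neg_left] at h
    have : (inner ℂ (x - P 0 0 x) ((v : E)) : ℂ) = inner ℂ (P 1 0 x) (T v) := by
      linear_combination h
    simpa using this

lemma charMatrix_BC' {T : E →ₗ.[ℂ] E} (hsa : IsSelfAdjoint T) {P : Fin 2 → Fin 2 → (E →L[ℂ] E)}
    (hP : IsCharMatrix T P) :
    (∀ x, ∃ h : (ContinuousLinearMap.id ℂ E - P 1 1) x ∈ T.domain,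
        T ⟨(ContinuousLinearMap.id ℂ E - P 1 1) x, h⟩ = P 0 1 x) ∧
    (∀ x, ∃ h : P 0 1 x ∈ T.domain,
        T ⟨P 0 1 x, h⟩ = x - (ContinuousLinearMap.id ℂ E - P 1 1) x) := by
  have hgr : ∀ y, ∃ h : P 0 1 y ∈ T.domain, T ⟨P 0 1 y, h⟩ = P 1 1 y := by
    intro y
    have h := hP.1 0 y
    simp only [_root_.map_zero, zero_add] at h
    exact mem_graph_pmap h
  constructor
  · intro x
    apply mem_graph_pmap
    rw [mem_graph_iff_inner hsa]
    intro v
    have h := hP.2 0 x v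
    simp only [_root_.map_zero, zero_add, zero_sub, inner_neg_left] at h
    have : (inner ℂ (P 0 1 x) ((v : E)) : ℂ) = inner ℂ (x - P 1 1 x) (T v) := by
      linear_combination -h
    simpa using this
  · intro x
    obtain ⟨h1, e1⟩ := hgr x
    refine ⟨h1, ?_⟩
    rw [e1]
    simp only [ContinuousLinearMap.sub_apply, ContinuousLinearMap.coe_id', id_eq]
    abel

lemma charMatrix_symm {T : E →ₗ.[ℂ] E} (hsa : IsSelfAdjoint T) {P : Fin 2 → Fin 2 → (E →L[ℂ] E)}
    (hP : IsCharMatrix T P) :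
    (∀ x, P 0 1 x = P 1 0 x) ∧ (∀ x, P 1 1 x = x - P 0 0 x) := by
  have hz1 : (Complex.I).im ≠ 0 := by simp
  have hz1' : Complex.I * Complex.I = -1 := Complex.I_mul_I
  have hz2 : (-Complex.I).im ≠ 0 := by simp
  have hz2' : (-Complex.I) * (-Complex.I) = -1 := by
    simpa using Complex.I_mul_I
  have hRp := isResolvent_mk hsa (charMatrix_BC hsa hP).1 (charMatrix_BC hsa hP).2 hz1 hz1'
  have hRp' := isResolvent_mk hsa (charMatrix_BC' hsa hP).1 (charMatrix_BC' hsa hP).2 hz1 hz1'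
  have hRm := isResolvent_mk hsa (charMatrix_BC hsa hP).1 (charMatrix_BC hsa hP).2 hz2 hz2'
  have hRm' := isResolvent_mk hsa (charMatrix_BC' hsa hP).1 (charMatrix_BC' hsa hP).2 hz2 hz2'
  have e1 : ∀ x, P 1 0 x + Complex.I • P 0 0 x
      = P 0 1 x + Complex.I • (x - P 1 1 x) := by
    intro x
    have h := isResolvent_unique hRp hRp' x
    simp only [ContinuousLinearMap.add_apply, ContinuousLinearMap.smul_apply,
      ContinuousLinearMap.sub_apply, ContinuousLinearMap.coe_id', id_eq] at h
    linear_combination (norm := module) h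
  have e2 : ∀ x, P 1 0 x - Complex.I • P 0 0 x
      = P 0 1 x - Complex.I • (x - P 1 1 x) := by
    intro x
    have h := isResolvent_unique hRm hRm' x
    simp only [ContinuousLinearMap.add_apply, ContinuousLinearMap.smul_apply,
      ContinuousLinearMap.sub_apply, ContinuousLinearMap.coe_id', id_eq, ContinuousLinearMap.neg_apply, neg_smul] at h
    linear_combination (norm := module) h
  have hA : ∀ x, (2:ℂ) • (P 1 0 x - P 0 1 x) = 0 := by
    intro x
    linear_combination (norm := module) e1 x + e2 x
  have hB : ∀ x, ((2:ℂ) * Complex.I) • (P 0 0 x - (x - P 1 1 x)) = 0 := by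
    intro x
    linear_combination (norm := module) e1 x - e2 x
  constructor
  · intro x
    have := (smul_eq_zero.mp (hA x)).resolve_left (by norm_num)
    have := sub_eq_zero.mp this
    exact this.symm
  · intro x
    have h2 := (smul_eq_zero.mp (hB x)).resolve_left
      (by simp [Complex.ext_iff] : ¬ (2 * Complex.I : ℂ) = 0)
    have h3 := sub_eq_zero.mp h2
    have : P 1 1 x = x - P 0 0 x := by
      rw [h3]; abel
    exact this


lemma exists_charMatrix {T : E →ₗ.[ℂ] E} (hsa : IsSelfAdjoint T) :
    ∃ P : Fin 2 → Fin 2 → (E →L[ℂ] E), IsCharMatrix T P := by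
  haveI : CompleteSpace (WithLp 2 (E × E)) := inferInstance
  set e : WithLp 2 (E × E) ≃L[ℂ] E × E := WithLp.prodContinuousLinearEquiv 2 ℂ E E with he
  set G : Submodule ℂ (WithLp 2 (E × E)) :=
    T.graph.comap (e.toLinearEquiv : WithLp 2 (E × E) →ₗ[ℂ] E × E) with hGdef
  have hGmem : ∀ v : WithLp 2 (E × E), v ∈ G ↔ e v ∈ T.graph := fun v => Iff.rfl
  have hGclosed : IsClosed (G : Set (WithLp 2 (E × E))) := by
    have : (G : Set (WithLp 2 (E × E))) = e ⁻¹' (T.graph : Set (E × E)) := rfl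
    rw [this]
    exact (graph_isClosed hsa).preimage e.continuous
  haveI : CompleteSpace G := hGclosed.completeSpace_coe
  set pr : WithLp 2 (E × E) →L[ℂ] WithLp 2 (E × E) :=
    G.subtypeL.comp (Submodule.orthogonalProjection G) with hpr
  have hprmem : ∀ v, pr v ∈ G := fun v => SetLike.coe_mem _
  set i0 : E →L[ℂ] WithLp 2 (E × E) :=
    (e.symm : E × E →L[ℂ] WithLp 2 (E × E)).comp (ContinuousLinearMap.inl ℂ E E) with hi0
  set i1 : E →L[ℂ] WithLp 2 (E × E) :=
    (e.symm : E × E →L[ℂ] WithLp 2 (E × E)).comp (ContinuousLinearMap.inr ℂ E E) with hi1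
  set p0 : WithLp 2 (E × E) →L[ℂ] E :=
    (ContinuousLinearMap.fst ℂ E E).comp (e : WithLp 2 (E × E) →L[ℂ] E × E) with hp0
  set p1 : WithLp 2 (E × E) →L[ℂ] E :=
    (ContinuousLinearMap.snd ℂ E E).comp (e : WithLp 2 (E × E) →L[ℂ] E × E) with hp1
  refine ⟨![![p0.comp (pr.comp i0), p0.comp (pr.comp i1)],
            ![p1.comp (pr.comp i0), p1.comp (pr.comp i1)]], ?_, ?_⟩
  · intro x y
    show (p0 (pr (i0 x)) + p0 (pr (i1 y)), p1 (pr (i0 x)) + p1 (pr (i1 y))) ∈ T.graph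
    have key : (p0 (pr (i0 x)) + p0 (pr (i1 y)), p1 (pr (i0 x)) + p1 (pr (i1 y)))
        = e (pr (i0 x + i1 y)) := by
      rw [map_add pr, map_add e]
      rfl
    rw [key]
    exact (hGmem _).mp (hprmem _)
  · intro x y u
    have hgu : e.symm ((u : E), T u) ∈ G := by
      rw [hGmem, e.apply_symm_apply]
      exact T.mem_graph u
    have hperp := Submodule.sub_starProjection_mem_orthogonal (K := G) (i0 x + i1 y)
    have h0 : (inner ℂ (e.symm ((u : E), T u)) ((i0 x + i1 y) - pr (i0 x + i1 y)) : ℂ) = 0 := by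
      exact hperp _ hgu
    show (inner ℂ (x - (p0 (pr (i0 x)) + p0 (pr (i1 y)))) (u : E) : ℂ)
      + (inner ℂ (y - (p1 (pr (i0 x)) + p1 (pr (i1 y)))) (T u) : ℂ) = 0
    set v : WithLp 2 (E × E) := i0 x + i1 y with hv
    set d : WithLp 2 (E × E) := v - pr v with hd
    rw [WithLp.prod_inner_apply] at h0
    have hgu1 : (e.symm ((u : E), T u)).fst = (u : E) := rfl
    have hgu2 : (e.symm ((u : E), T u)).snd = T u := rfl
    have hv1 : v.fst = x := by
      rw [hv, WithLp.add_fst]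
      show x + 0 = x
      rw [add_zero]
    have hv2 : v.snd = y := by
      rw [hv, WithLp.add_snd]
      show 0 + y = y
      rw [zero_add]
    have hd1 : d.fst = x - (p0 (pr (i0 x)) + p0 (pr (i1 y))) := by
      rw [hd, WithLp.sub_fst, hv1]
      congr 1
      show p0 (pr v) = _
      rw [hv, map_add pr, map_add p0]
    have hd2 : d.snd = y - (p1 (pr (i0 x)) + p1 (pr (i1 y))) := by
      rw [hd, WithLp.sub_snd, hv2]
      congr 1
      show p1 (pr v) = _
      rw [hv, map_add pr, map_add p1]
    change (inner ℂ (e.symm ((u : E), T u)).fst d.fst : ℂ)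
      + inner ℂ (e.symm ((u : E), T u)).snd d.snd = 0 at h0
    rw [hgu1, hgu2, hd1, hd2] at h0
    have h1 := congrArg (starRingEnd ℂ) h0
    simpa [inner_conj_symm] using h1


end Stmt4Aux

set_option linter.unusedSectionVars true

/-- If self-adjoint families `{Tₙ t}` are N-measurable and, for a.e. `t`,
`Tₙ t → T t` in the weak resolvent sense, then the self-adjoint family `{T t}` is N-measurable. -/
theorem stmt_4 {H : Type*} [NormedAddCommGroup H] [InnerProductSpace ℂ H]
    [CompleteSpace H] [TopologicalSpace.SeparableSpace H]
    (T : ℝ → (H →ₗ.[ℂ] H)) (Tn : ℕ → ℝ → (H →ₗ.[ℂ] H))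
    (hsaT : ∀ t, IsSelfAdjoint (T t)) (hsaTn : ∀ n t, IsSelfAdjoint (Tn n t))
    (hN : ∀ n, NMeas (Tn n))
    (hconv : ∀ᵐ t ∂(volume : Measure ℝ), ∀ z : ℂ, z.im ≠ 0 →
      ∀ (Rn : ℕ → (H →L[ℂ] H)) (R : H →L[ℂ] H),
        (∀ n, IsResolvent (Tn n t) z (Rn n)) → IsResolvent (T t) z R →
          ∀ f g : H,
            Filter.Tendsto (fun n : ℕ => (inner ℂ f (Rn n g) : ℂ)) Filter.atTop
              (nhds (inner ℂ f (R g) : ℂ))) :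
    NMeas T := by
  classical
  choose Pn hPn hPnMeas using hN
  choose P hP using fun t => Stmt4Aux.exists_charMatrix (hsaT t)
  refine ⟨P, hP, ?_⟩
  have hz1 : (Complex.I).im ≠ 0 := by simp
  have hz1' : Complex.I * Complex.I = -1 := Complex.I_mul_I
  have hz2 : (-Complex.I).im ≠ 0 := by simp
  have hz2' : (-Complex.I) * (-Complex.I) = -1 := by simpa using Complex.I_mul_I
  have hR : ∀ t, IsResolvent (T t) Complex.I (P t 1 0 + Complex.I • P t 0 0) := fun t =>
    Stmt4Aux.isResolvent_mk (hsaT t) (Stmt4Aux.charMatrix_BC (hsaT t) (hP t)).1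
      (Stmt4Aux.charMatrix_BC (hsaT t) (hP t)).2 hz1 hz1'
  have hS : ∀ t, IsResolvent (T t) (-Complex.I) (P t 1 0 + (-Complex.I) • P t 0 0) := fun t =>
    Stmt4Aux.isResolvent_mk (hsaT t) (Stmt4Aux.charMatrix_BC (hsaT t) (hP t)).1
      (Stmt4Aux.charMatrix_BC (hsaT t) (hP t)).2 hz2 hz2'
  have hRn : ∀ n t, IsResolvent (Tn n t) Complex.I
      (Pn n t 1 0 + Complex.I • Pn n t 0 0) := fun n t =>
    Stmt4Aux.isResolvent_mk (hsaTn n t) (Stmt4Aux.charMatrix_BC (hsaTn n t) (hPn n t)).1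
      (Stmt4Aux.charMatrix_BC (hsaTn n t) (hPn n t)).2 hz1 hz1'
  have hSn : ∀ n t, IsResolvent (Tn n t) (-Complex.I)
      (Pn n t 1 0 + (-Complex.I) • Pn n t 0 0) := fun n t =>
    Stmt4Aux.isResolvent_mk (hsaTn n t) (Stmt4Aux.charMatrix_BC (hsaTn n t) (hPn n t)).1
      (Stmt4Aux.charMatrix_BC (hsaTn n t) (hPn n t)).2 hz2 hz2'
  have measRS : ∀ z : ℂ, z.im ≠ 0 →
      (∀ t, IsResolvent (T t) z (P t 1 0 + z • P t 0 0)) →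
      (∀ n t, IsResolvent (Tn n t) z (Pn n t 1 0 + z • Pn n t 0 0)) →
      ∀ h g : H, AEMeasurable
        (fun t : ℝ => (inner ℂ h ((P t 1 0 + z • P t 0 0) g) : ℂ)) volume := by
    intro z hz hRt hRnt h g
    apply aemeasurable_of_tendsto_metrizable_ae Filter.atTop
      (f := fun (n : ℕ) (t : ℝ) => (inner ℂ h ((Pn n t 1 0 + z • Pn n t 0 0) g) : ℂ))
    · intro n
      have h1 := hPnMeas n 1 0 h g
      have h2 := hPnMeas n 0 0 h g
      have heq : (fun t : ℝ => (inner ℂ h ((Pn n t 1 0 + z • Pn n t 0 0) g) : ℂ))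
          = fun t : ℝ => (inner ℂ h (Pn n t 1 0 g) : ℂ) + z * (inner ℂ h (Pn n t 0 0 g) : ℂ) := by
        funext t
        simp [inner_add_right, inner_smul_right]
      rw [heq]
      exact h1.add (h2.const_mul _)
    · filter_upwards [hconv] with t ht
      exact ht z hz (fun n => Pn n t 1 0 + z • Pn n t 0 0) _
        (fun n => hRnt n t) (hRt t) h g
  have measR := measRS Complex.I hz1 hR hRn
  have measS := measRS (-Complex.I) hz2 hS hSn
  have meas00 : ∀ h g : H, AEMeasurable (fun t : ℝ => (inner ℂ h (P t 0 0 g) : ℂ)) volume := by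
    intro h g
    have hcomb := ((measR h g).sub (measS h g)).div_const (2 * Complex.I)
    have heq : (fun t : ℝ => (inner ℂ h (P t 0 0 g) : ℂ))
        = fun t : ℝ => ((inner ℂ h ((P t 1 0 + Complex.I • P t 0 0) g) : ℂ)
            - (inner ℂ h ((P t 1 0 + (-Complex.I) • P t 0 0) g) : ℂ)) / (2 * Complex.I) := by
      funext t
      simp only [ContinuousLinearMap.add_apply, ContinuousLinearMap.smul_apply,
        inner_add_right, inner_smul_right]
      rw [eq_div_iff (by simp [Complex.ext_iff] : (2 * Complex.I : ℂ) ≠ 0)]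
      ring
    rw [heq]
    exact hcomb
  have meas10 : ∀ h g : H, AEMeasurable (fun t : ℝ => (inner ℂ h (P t 1 0 g) : ℂ)) volume := by
    intro h g
    have hcomb := ((measR h g).add (measS h g)).div_const 2
    have heq : (fun t : ℝ => (inner ℂ h (P t 1 0 g) : ℂ))
        = fun t : ℝ => ((inner ℂ h ((P t 1 0 + Complex.I • P t 0 0) g) : ℂ)
            + (inner ℂ h ((P t 1 0 + (-Complex.I) • P t 0 0) g) : ℂ)) / 2 := by
      funext t
      simp only [ContinuousLinearMap.add_apply, ContinuousLinearMap.smul_apply,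
        inner_add_right, inner_smul_right]
      rw [eq_div_iff (by norm_num : (2 : ℂ) ≠ 0)]
      ring
    rw [heq]
    exact hcomb
  intro j k h g
  have hfin : ∀ i : Fin 2, i = 0 ∨ i = 1 := by decide
  rcases hfin j with rfl | rfl <;> rcases hfin k with rfl | rfl
  · exact meas00 h g
  · have heq : (fun t : ℝ => (inner ℂ h (P t 0 1 g) : ℂ))
        = fun t : ℝ => (inner ℂ h (P t 1 0 g) : ℂ) := by
      funext t
      rw [(Stmt4Aux.charMatrix_symm (hsaT t) (hP t)).1 g]
    simpa [heq] using meas10 h g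
  · exact meas10 h g
  · have heq : (fun t : ℝ => (inner ℂ h (P t 1 1 g) : ℂ))
        = fun t : ℝ => (inner ℂ h g : ℂ) - (inner ℂ h (P t 0 0 g) : ℂ) := by
      funext t
      rw [(Stmt4Aux.charMatrix_symm (hsaT t) (hP t)).2 g, inner_sub_right]
    rw [heq]
    exact aemeasurable_const.sub (meas00 h g)

end
end

section
/- Let H be a separable complex Hilbert space and let {T(t)}_{t∈ℝ} be a family of densely defined closed linear operators in H. For each t ∈ ℝ let B(t), C(t), D(t) ∈ B(H) be the bounded operators with B(t) = (T(t)*T(t) + I)^{−1} (i.e., for every x ∈ H, B(t)x ∈ dom(T(t)), T(t)B(t)x ∈ dom(T(t)*), and T(t)*T(t)B(t)x + B(t)x = x), C(t) = T(t)B(t), and D(t) = (T(t)T(t)* + I)^{−1} (i.e., for every x ∈ H, D(t)x ∈ dom(T(t)*), T(t)*D(t)x ∈ dom(T(t)), and T(t)T(t)*D(t)x + D(t)x = x). Then the family {T(t)}_{t∈ℝ} is N-measurable if and only if the three families {B(t)}_{t∈ℝ}, {C(t)}_{t∈ℝ}, and {D(t)}_{t∈ℝ} are weakly measurable. -/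
open MeasureTheory

noncomputable section

variable {H : Type*} [NormedAddCommGroup H] [InnerProductSpace ℂ H]

section Aux

variable [CompleteSpace H]

omit [CompleteSpace H] in
lemma charMatrix_unique' (T : H →ₗ.[ℂ] H) {P Q : Fin 2 → Fin 2 → (H →L[ℂ] H)}
    (hP : IsCharMatrix T P) (hQ : IsCharMatrix T Q) :
    ∀ j k x, P j k x = Q j k x := by
  have key : ∀ x y : H, P 0 0 x + P 0 1 y = Q 0 0 x + Q 0 1 y ∧
      P 1 0 x + P 1 1 y = Q 1 0 x + Q 1 1 y := by
    intro x y
    set a := P 0 0 x + P 0 1 y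
    set b := P 1 0 x + P 1 1 y
    set a' := Q 0 0 x + Q 0 1 y
    set b' := Q 1 0 x + Q 1 1 y
    have hmem : (a - a', b - b') ∈ T.graph := by
      have := T.graph.sub_mem (hP.1 x y) (hQ.1 x y)
      simpa using this
    rw [T.mem_graph_iff] at hmem
    obtain ⟨u, hu1, hu2⟩ := hmem
    have h1 := hP.2 x y u
    have h2 := hQ.2 x y u
    have h3 : (inner ℂ (a' - a) (u : H) : ℂ) + inner ℂ (b' - b) (T u) = 0 := by
      have := sub_eq_zero.mpr (h1.trans h2.symm)
      rw [← this]
      simp only [inner_sub_left]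
      ring
    rw [hu1, hu2] at h3
    have e1 : (inner ℂ (a' - a) (a - a') : ℂ) = -(‖a - a'‖:ℂ)^2 := by
      rw [← neg_sub a a', inner_neg_left, inner_self_eq_norm_sq_to_K]; norm_cast
    have e2 : (inner ℂ (b' - b) (b - b') : ℂ) = -(‖b - b'‖:ℂ)^2 := by
      rw [← neg_sub b b', inner_neg_left, inner_self_eq_norm_sq_to_K]; norm_cast
    have h4 : -((‖a - a'‖ : ℂ)^2) - (‖b - b'‖:ℂ)^2 = 0 := by
      rw [← h3, e1, e2]; ring
    have ha : ‖a - a'‖ = 0 ∧ ‖b - b'‖ = 0 := by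
      have h5 : (‖a - a'‖:ℂ)^2 + (‖b - b'‖:ℂ)^2 = 0 := by linear_combination -h4
      have h6 : (‖a - a'‖:ℝ)^2 + (‖b - b'‖:ℝ)^2 = 0 := by
        exact_mod_cast h5
      constructor <;> nlinarith [norm_nonneg (a - a'), norm_nonneg (b - b'),
        sq_nonneg ‖a - a'‖, sq_nonneg ‖b - b'‖]
    constructor
    · exact sub_eq_zero.mp (norm_eq_zero.mp ha.1)
    · exact sub_eq_zero.mp (norm_eq_zero.mp ha.2)
  intro j k x
  have k0 := key x 0
  have k1 := key 0 x
  simp only [map_zero, add_zero, zero_add] at k0 k1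
  fin_cases j <;> fin_cases k <;> simp [k0.1, k0.2, k1.1, k1.2]

lemma cadj_eq' (T : H →ₗ.[ℂ] H) (hdense : Dense (T.domain : Set H))
    {B C D : H →L[ℂ] H} (hB : IsInvTstarTAddI T B) (hC : IsTComp T B C)
    (hD : IsInvTTstarAddI T D) (y : H) :
    ∀ (d1 : D y ∈ T.adjoint.domain),
      ContinuousLinearMap.adjoint C y = T.adjoint ⟨D y, d1⟩ := by
  intro d1
  obtain ⟨d1', d2, eqD⟩ := hD y
  have fa := T.adjoint_isFormalAdjoint hdense
  apply ext_inner_right ℂ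
  intro z
  obtain ⟨b1, b2, eqB⟩ := hB z
  obtain ⟨c1, eqC⟩ := hC z
  set w : H := T.adjoint ⟨D y, d1⟩ with hw
  have hweq : (⟨D y, d1⟩ : T.adjoint.domain) = ⟨D y, d1'⟩ := rfl
  have d2' : w ∈ T.domain := by rw [hw, hweq]; exact d2
  have hTw : T ⟨w, d2'⟩ = y - D y := by
    rw [eq_sub_iff_add_eq]
    rw [hw, hweq] at *
    exact eqD
  have lhs : (inner ℂ (ContinuousLinearMap.adjoint C y) z : ℂ) = inner ℂ y (C z) :=
    ContinuousLinearMap.adjoint_inner_left C z y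
  rw [lhs]
  symm
  have hz : z = T.adjoint ⟨T ⟨B z, b1⟩, b2⟩ + B z := eqB.symm
  calc (inner ℂ (w : H) z : ℂ)
      = inner ℂ w (T.adjoint ⟨T ⟨B z, b1⟩, b2⟩) + inner ℂ w (B z) := by
        rw [← inner_add_right, ← hz]
    _ = inner ℂ (T ⟨w, d2'⟩) ((T ⟨B z, b1⟩ : H)) + inner ℂ (T.adjoint ⟨D y, d1⟩) (B z) := by
        congr 1
        · rw [← inner_conj_symm, fa ⟨T ⟨B z, b1⟩, b2⟩ ⟨w, d2'⟩, inner_conj_symm]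
    _ = inner ℂ (y - D y) ((T ⟨B z, b1⟩ : H)) + inner ℂ (D y) (T ⟨B z, b1⟩) := by
        rw [hTw, fa ⟨D y, d1⟩ ⟨B z, b1⟩]
    _ = inner ℂ y (C z) := by
        rw [inner_sub_left, eqC]; ring

lemma charMatrix_of_BCD' (T : H →ₗ.[ℂ] H) (hdense : Dense (T.domain : Set H))
    {B C D : H →L[ℂ] H} (hB : IsInvTstarTAddI T B) (hC : IsTComp T B C)
    (hD : IsInvTTstarAddI T D) :
    IsCharMatrix T ![![B, ContinuousLinearMap.adjoint C], ![C, 1 - D]] := by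
  have fa := T.adjoint_isFormalAdjoint hdense
  constructor
  · intro x y
    obtain ⟨d1, d2, eqD⟩ := hD y
    obtain ⟨c1, eqC⟩ := hC x
    have hadj := cadj_eq' T hdense hB hC hD y d1
    simp only [Matrix.cons_val_zero, Matrix.cons_val_one, Matrix.head_cons,
      ContinuousLinearMap.sub_apply, ContinuousLinearMap.one_apply]
    have m1 : ((B x : H), C x) ∈ T.graph := by
      have := T.mem_graph ⟨B x, c1⟩
      rwa [eqC] at this
    have m2 : ((T.adjoint ⟨D y, d1⟩ : H), y - D y) ∈ T.graph := by
      have := T.mem_graph ⟨T.adjoint ⟨D y, d1⟩, d2⟩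
      rwa [eq_sub_of_add_eq eqD] at this
    have := T.graph.add_mem m1 m2
    rw [← hadj] at this
    simpa using this
  · intro x y u
    obtain ⟨d1, d2, eqD⟩ := hD y
    obtain ⟨b1, b2, eqB⟩ := hB x
    obtain ⟨c1, eqC⟩ := hC x
    have hadj := cadj_eq' T hdense hB hC hD y d1
    simp only [Matrix.cons_val_zero, Matrix.cons_val_one, Matrix.head_cons,
      ContinuousLinearMap.sub_apply, ContinuousLinearMap.one_apply]
    have e1 : x - (B x + ContinuousLinearMap.adjoint C y)
        = T.adjoint ⟨T ⟨B x, b1⟩, b2⟩ - T.adjoint ⟨D y, d1⟩ := by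
      have eqB' : (T.adjoint ⟨T ⟨B x, b1⟩, b2⟩ : H) = x - B x := eq_sub_of_add_eq eqB
      rw [hadj, eqB']; abel
    have e2 : y - (C x + (y - D y)) = D y - C x := by abel
    rw [e1, e2, inner_sub_left, inner_sub_left,
      fa ⟨T ⟨B x, b1⟩, b2⟩ u, fa ⟨D y, d1⟩ u, ← eqC]
    ring

end Aux

/-- `{T t}` is N-measurable iff the three families
`B t = (T t⋆ T t + I)⁻¹`, `C t = T t • B t` and `D t = (T t T t⋆ + I)⁻¹` are weakly measurable. -/
theorem stmt_5 {H : Type*} [NormedAddCommGroup H] [InnerProductSpace ℂ H]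
    [CompleteSpace H] [TopologicalSpace.SeparableSpace H]
    (T : ℝ → (H →ₗ.[ℂ] H))
    (hdense : ∀ t, Dense ((T t).domain : Set H)) (hclosed : ∀ t, (T t).IsClosed)
    (B C D : ℝ → (H →L[ℂ] H))
    (hB : ∀ t, IsInvTstarTAddI (T t) (B t))
    (hC : ∀ t, IsTComp (T t) (B t) (C t))
    (hD : ∀ t, IsInvTTstarAddI (T t) (D t)) :
    NMeas T ↔ (WeakMeasOp B ∧ WeakMeasOp C ∧ WeakMeasOp D) := by
  constructor
  · rintro ⟨P, hcharP, hmeasP⟩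
    have huniq : ∀ t, ∀ j k x, P t j k x
        = (![![B t, ContinuousLinearMap.adjoint (C t)], ![C t, 1 - D t]]) j k x :=
      fun t => charMatrix_unique' (T t) (hcharP t)
        (charMatrix_of_BCD' (T t) (hdense t) (hB t) (hC t) (hD t))
    refine ⟨?_, ?_, ?_⟩
    · intro h k
      have he : (fun t => (inner ℂ h (B t k) : ℂ)) = fun t => (inner ℂ h (P t 0 0 k) : ℂ) := by
        funext t
        have := huniq t 0 0 k
        simp only [Matrix.cons_val_zero] at this
        rw [this]
      rw [he]; exact hmeasP 0 0 h k
    · intro h k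
      have he : (fun t => (inner ℂ h (C t k) : ℂ)) = fun t => (inner ℂ h (P t 1 0 k) : ℂ) := by
        funext t
        have := huniq t 1 0 k
        simp only [Matrix.cons_val_zero, Matrix.cons_val_one, Matrix.head_cons] at this
        rw [this]
      rw [he]; exact hmeasP 1 0 h k
    · intro h k
      have he : (fun t => (inner ℂ h (D t k) : ℂ))
          = fun t => (inner ℂ h k : ℂ) - (inner ℂ h (P t 1 1 k) : ℂ) := by
        funext t
        have := huniq t 1 1 k
        simp only [Matrix.cons_val_one, Matrix.cons_val_zero, Matrix.head_cons, Matrix.head_fin_const,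
          ContinuousLinearMap.sub_apply, ContinuousLinearMap.one_apply] at this
        rw [this, inner_sub_right]
        ring
      rw [he]; exact aemeasurable_const.sub (hmeasP 1 1 h k)
  · rintro ⟨hBm, hCm, hDm⟩
    refine ⟨fun t => ![![B t, ContinuousLinearMap.adjoint (C t)], ![C t, 1 - D t]],
      fun t => charMatrix_of_BCD' (T t) (hdense t) (hB t) (hC t) (hD t), ?_⟩
    intro j k
    fin_cases j <;> fin_cases k <;> intro h k
    · simpa using hBm h k
    · simp only [Fin.mk_zero, Fin.mk_one, Matrix.cons_val_zero, Matrix.cons_val_one,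
        Matrix.head_cons]
      have he : (fun t => (inner ℂ h (ContinuousLinearMap.adjoint (C t) k) : ℂ))
          = fun t => (starRingEnd ℂ) (inner ℂ k (C t h) : ℂ) := by
        funext t
        rw [ContinuousLinearMap.adjoint_inner_right, ← inner_conj_symm]
      rw [he]
      exact Complex.continuous_conj.measurable.comp_aemeasurable (hCm k h)
    · simpa using hCm h k
    · simp only [Fin.mk_zero, Fin.mk_one, Matrix.cons_val_one, Matrix.cons_val_zero, Matrix.head_cons,
        Matrix.head_fin_const, ContinuousLinearMap.sub_apply, ContinuousLinearMap.one_apply]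
      have he : (fun t => (inner ℂ h (k - D t k) : ℂ))
          = fun t => (inner ℂ h k : ℂ) - (inner ℂ h (D t k) : ℂ) := by
        funext t; rw [inner_sub_right]
      rw [he]
      exact aemeasurable_const.sub (hDm h k)


end
end

section
/- Let H be a separable complex Hilbert space and let {T(t)}_{t∈ℝ} be a family of densely defined closed linear operators in H (so that each adjoint T(t)* is also densely defined and closed). Then the family {T(t)}_{t∈ℝ} is N-measurable if and only if the family of adjoints {T(t)*}_{t∈ℝ} is N-measurable. -/
open MeasureTheory

noncomputable section

variable {H : Type*} [NormedAddCommGroup H] [InnerProductSpace ℂ H]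

lemma key_mem_graph [CompleteSpace H] (T : H →ₗ.[ℂ] H) (hd : Dense (T.domain : Set H))
    (hc : T.IsClosed) (f g : H)
    (h : ∀ u : T.adjoint.domain, (inner ℂ g (u : H) : ℂ) = inner ℂ f (T.adjoint u)) :
    (f, g) ∈ T.graph := by
  classical
  set e : WithLp 2 (H × H) ≃ₗ[ℂ] H × H := WithLp.linearEquiv 2 ℂ (H × H) with he
  set G : Submodule ℂ (WithLp 2 (H × H)) := T.graph.comap (e : WithLp 2 (H × H) →ₗ[ℂ] H × H)
    with hGdef
  have hGclosed : IsClosed (G : Set (WithLp 2 (H × H))) := by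
    have h1 : (G : Set (WithLp 2 (H × H)))
        = (WithLp.equiv 2 (H × H)) ⁻¹' (T.graph : Set (H × H)) := rfl
    rw [h1]
    exact hc.preimage (WithLp.prod_continuous_ofLp 2 H H)
  haveI : CompleteSpace G := hGclosed.completeSpace_coe
  obtain ⟨p, hp, q, hq, hv⟩ := G.exists_add_mem_mem_orthogonal (e.symm (f, g))
  have hqG : ∀ u ∈ G, (inner ℂ u q : ℂ) = 0 := fun u hu => (Submodule.mem_orthogonal G q).mp hq u hu
  have hrel : ∀ x : T.domain, (inner ℂ (x : H) ((e q).1) : ℂ) + inner ℂ (T x) ((e q).2) = 0 := by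
    intro x
    have hmem : e.symm ((x : H), T x) ∈ G := by
      rw [hGdef, Submodule.mem_comap]
      simpa using T.mem_graph x
    have h2 := hqG _ hmem
    rw [WithLp.prod_inner_apply] at h2
    exact h2
  have hrel' : ∀ x : T.domain, (inner ℂ (-(e q).1) (x : H) : ℂ) = inner ℂ ((e q).2) (T x) := by
    intro x
    have h3 := congrArg (starRingEnd ℂ) (hrel x)
    simp only [map_add, inner_conj_symm, map_zero] at h3
    rw [inner_neg_left]
    linear_combination -h3
  have hm2 : (e q).2 ∈ T.adjoint.domain :=
    LinearPMap.mem_adjoint_domain_of_exists _ ⟨-(e q).1, hrel'⟩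
  have ha : T.adjoint ⟨(e q).2, hm2⟩ = -(e q).1 :=
    LinearPMap.adjoint_apply_eq hd ⟨(e q).2, hm2⟩ hrel'
  have h0 : (inner ℂ (e.symm (f, g)) q : ℂ) = 0 := by
    rw [WithLp.prod_inner_apply]
    have h5 := h ⟨(e q).2, hm2⟩
    rw [ha] at h5
    have hfst : ((e.symm (f, g) : WithLp 2 (H × H))).ofLp.1 = f := rfl
    have hsnd : ((e.symm (f, g) : WithLp 2 (H × H))).ofLp.2 = g := rfl
    rw [hfst, hsnd]
    rw [inner_neg_right] at h5
    have h5' : (inner ℂ g (q.ofLp.2) : ℂ) = -inner ℂ f q.ofLp.1 := h5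
    linear_combination h5'
  have hqq : (inner ℂ q q : ℂ) = 0 := by
    have h6 : (inner ℂ (p + q) q : ℂ) = 0 := by rw [← hv]; exact h0
    rw [inner_add_left, hqG p hp, zero_add] at h6
    exact h6
  have hq0 : q = 0 := inner_self_eq_zero.mp hqq
  rw [hq0, add_zero] at hv
  have : e.symm (f, g) ∈ G := hv ▸ hp
  rw [hGdef, Submodule.mem_comap] at this
  simpa using this


/-- The transform sending the characteristic matrix of `T` to that of `T†`. -/
def adjPmat (P : Fin 2 → Fin 2 → (H →L[ℂ] H)) : Fin 2 → Fin 2 → (H →L[ℂ] H) :=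
  ![![1 - P 1 1, P 1 0], ![P 0 1, 1 - P 0 0]]

lemma adjPmat_00 (P : Fin 2 → Fin 2 → (H →L[ℂ] H)) : adjPmat P 0 0 = 1 - P 1 1 := rfl
lemma adjPmat_01 (P : Fin 2 → Fin 2 → (H →L[ℂ] H)) : adjPmat P 0 1 = P 1 0 := rfl
lemma adjPmat_10 (P : Fin 2 → Fin 2 → (H →L[ℂ] H)) : adjPmat P 1 0 = P 0 1 := rfl
lemma adjPmat_11 (P : Fin 2 → Fin 2 → (H →L[ℂ] H)) : adjPmat P 1 1 = 1 - P 0 0 := rfl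

lemma isCharMatrixAdjoint [CompleteSpace H] (T : H →ₗ.[ℂ] H) (hd : Dense (T.domain : Set H))
    {P : Fin 2 → Fin 2 → (H →L[ℂ] H)} (hP : IsCharMatrix T P) :
    IsCharMatrix T.adjoint (adjPmat P) := by
  obtain ⟨hP1, hP2⟩ := hP
  constructor
  · intro x y
    have key : ∀ w : T.domain,
        (inner ℂ (P 0 1 x + (y - P 0 0 y)) (w : H) : ℂ)
          = inner ℂ (x - P 1 1 x + P 1 0 y) (T w) := by
      intro w
      have h1 := hP2 (-y) x w
      simp only [map_neg, inner_sub_left, inner_add_left, inner_neg_left, map_add, map_sub]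
        at h1 ⊢
      linear_combination -h1
    have hfmem : (x - P 1 1 x + P 1 0 y) ∈ T.adjoint.domain :=
      LinearPMap.mem_adjoint_domain_of_exists _ ⟨_, key⟩
    have hfeq : T.adjoint ⟨x - P 1 1 x + P 1 0 y, hfmem⟩ = P 0 1 x + (y - P 0 0 y) :=
      LinearPMap.adjoint_apply_eq hd _ key
    have hg : (x - P 1 1 x + P 1 0 y, P 0 1 x + (y - P 0 0 y)) ∈ T.adjoint.graph := by
      rw [← hfeq]
      exact T.adjoint.mem_graph ⟨x - P 1 1 x + P 1 0 y, hfmem⟩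
    simpa [adjPmat_00, adjPmat_01, adjPmat_10, adjPmat_11, ContinuousLinearMap.sub_apply,
      ContinuousLinearMap.one_apply] using hg
  · intro x y u
    have hg := hP1 (-y) x
    rw [LinearPMap.mem_graph_iff] at hg
    obtain ⟨c, hc1, hc2⟩ := hg
    have hfa := LinearPMap.adjoint_isFormalAdjoint hd u c
    rw [hc1, hc2] at hfa
    have hconj := congrArg (starRingEnd ℂ) hfa
    simp only [inner_conj_symm] at hconj
    simp only [adjPmat_00, adjPmat_01, adjPmat_10, adjPmat_11, ContinuousLinearMap.sub_apply,
      ContinuousLinearMap.one_apply, map_neg, inner_sub_left, inner_add_left,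
      inner_neg_left] at hconj ⊢
    linear_combination -hconj

lemma isCharMatrixOfAdjoint [CompleteSpace H] (T : H →ₗ.[ℂ] H)
    (hd : Dense (T.domain : Set H)) (hc : T.IsClosed)
    {P : Fin 2 → Fin 2 → (H →L[ℂ] H)} (hP : IsCharMatrix T.adjoint P)
    (hkey : ∀ f g : H,
      (∀ u : T.adjoint.domain, (inner ℂ g (u : H) : ℂ) = inner ℂ f (T.adjoint u)) →
      (f, g) ∈ T.graph) :
    IsCharMatrix T (adjPmat P) := by
  obtain ⟨hP1, hP2⟩ := hP
  constructor
  · intro x y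
    have key : ∀ u : T.adjoint.domain,
        (inner ℂ (P 0 1 x + (y - P 0 0 y)) (u : H) : ℂ)
          = inner ℂ (x - P 1 1 x + P 1 0 y) (T.adjoint u) := by
      intro u
      have h1 := hP2 (-y) x u
      simp only [map_neg, inner_sub_left, inner_add_left, inner_neg_left, map_add, map_sub]
        at h1 ⊢
      linear_combination -h1
    have hg := hkey (x - P 1 1 x + P 1 0 y) (P 0 1 x + (y - P 0 0 y)) key
    simpa [adjPmat_00, adjPmat_01, adjPmat_10, adjPmat_11, ContinuousLinearMap.sub_apply,
      ContinuousLinearMap.one_apply] using hg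
  · intro x y w
    have hg := hP1 (-y) x
    rw [LinearPMap.mem_graph_iff] at hg
    obtain ⟨c, hc1, hc2⟩ := hg
    have hfa := LinearPMap.adjoint_isFormalAdjoint hd c w
    rw [hc1, hc2] at hfa
    simp only [adjPmat_00, adjPmat_01, adjPmat_10, adjPmat_11, ContinuousLinearMap.sub_apply,
      ContinuousLinearMap.one_apply, map_neg, inner_sub_left, inner_add_left,
      inner_neg_left] at hfa ⊢
    linear_combination hfa


lemma weakMeasOp_adjPmat {P : ℝ → Fin 2 → Fin 2 → (H →L[ℂ] H)}
    (hP : ∀ j k : Fin 2, WeakMeasOp (fun t => P t j k)) :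
    ∀ j k : Fin 2, WeakMeasOp (fun t => adjPmat (P t) j k) := by
  have hsub : ∀ j k : Fin 2, WeakMeasOp (fun t => 1 - P t j k) := by
    intro j k h k'
    have : (fun t : ℝ => (inner ℂ h ((1 - P t j k) k') : ℂ))
        = fun t : ℝ => (inner ℂ h k' : ℂ) - inner ℂ h (P t j k k') := by
      funext t
      simp [ContinuousLinearMap.sub_apply, inner_sub_right]
    rw [this]
    exact aemeasurable_const.sub (hP j k h k')
  intro j k
  fin_cases j <;> fin_cases k
  · exact hsub 1 1
  · exact hP 1 0
  · exact hP 0 1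
  · exact hsub 0 0


/-- A family of densely defined closed operators is N-measurable iff the family
of adjoints is N-measurable. -/
theorem stmt_6 {H : Type*} [NormedAddCommGroup H] [InnerProductSpace ℂ H]
    [CompleteSpace H] [TopologicalSpace.SeparableSpace H]
    (T : ℝ → (H →ₗ.[ℂ] H))
    (hdense : ∀ t, Dense ((T t).domain : Set H)) (hclosed : ∀ t, (T t).IsClosed) :
    NMeas T ↔ NMeas (fun t => (T t).adjoint) := by
  constructor
  · rintro ⟨P, hchar, hmeas⟩
    exact ⟨fun t => adjPmat (P t),
      fun t => isCharMatrixAdjoint (T t) (hdense t) (hchar t), weakMeasOp_adjPmat hmeas⟩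
  · rintro ⟨P, hchar, hmeas⟩
    refine ⟨fun t => adjPmat (P t), fun t => ?_, weakMeasOp_adjPmat hmeas⟩
    exact isCharMatrixOfAdjoint (T t) (hdense t) (hclosed t) (hchar t)
      (fun f g h => key_mem_graph (T t) (hdense t) (hclosed t) f g h)


end
end

section
/- Let H be a separable complex Hilbert space, let T₀ and T₁ be densely defined, closed, unbounded, symmetric operators in H with T₀ ⊊ T₁ (T₀ ⊆ T₁ and T₀ ≠ T₁), and let 𝔈 ⊆ ℝ be a set that is not Lebesgue measurable. Define T̃(t) = T₀ for t ∈ 𝔈 and T̃(t) = T₁ for t ∈ ℝ∖𝔈. Then the family {T̃(t)}_{t∈ℝ} is weakly measurable but not N-measurable. -/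
open MeasureTheory

noncomputable section

variable {H : Type*} [NormedAddCommGroup H] [InnerProductSpace ℂ H]

private lemma proj_unique {T : H →ₗ.[ℂ] H} {x y a b a' b' : H}
    (hab : (a, b) ∈ T.graph) (hab' : (a', b') ∈ T.graph)
    (h1 : ∀ u : T.domain, (inner ℂ (x - a) (u : H) : ℂ) + inner ℂ (y - b) (T u) = 0)
    (h2 : ∀ u : T.domain, (inner ℂ (x - a') (u : H) : ℂ) + inner ℂ (y - b') (T u) = 0) :
    a = a' ∧ b = b' := by
  obtain ⟨ua, hua1, hua2⟩ := T.mem_graph_iff.mp hab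
  obtain ⟨ua', hua'1, hua'2⟩ := T.mem_graph_iff.mp hab'
  have hcoe : ((ua' - ua : T.domain) : H) = a' - a := by
    push_cast
    rw [hua1, hua'1]
  have hT : T (ua' - ua) = b' - b := by rw [T.map_sub, hua2, hua'2]
  have e1 := h1 (ua' - ua)
  have e2 := h2 (ua' - ua)
  rw [hcoe, hT] at e1 e2
  have expand1 : (inner ℂ (a' - a) (a' - a) : ℂ)
      = inner ℂ (x - a) (a' - a) - inner ℂ (x - a') (a' - a) := by
    rw [← inner_sub_left]
    congr 1
    abel
  have expand2 : (inner ℂ (b' - b) (b' - b) : ℂ)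
      = inner ℂ (y - b) (b' - b) - inner ℂ (y - b') (b' - b) := by
    rw [← inner_sub_left]
    congr 1
    abel
  have key : (inner ℂ (a' - a) (a' - a) : ℂ) + inner ℂ (b' - b) (b' - b) = 0 := by
    rw [expand1, expand2]
    linear_combination e1 - e2
  rw [inner_self_eq_norm_sq_to_K, inner_self_eq_norm_sq_to_K] at key
  have hr : ‖a' - a‖ ^ 2 + ‖b' - b‖ ^ 2 = 0 := by
    have h0 : ((‖a' - a‖ ^ 2 + ‖b' - b‖ ^ 2 : ℝ) : ℂ) = 0 := by push_cast; exact key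
    exact_mod_cast h0
  have hA : ‖a' - a‖ = 0 := by nlinarith [sq_nonneg ‖a' - a‖, sq_nonneg ‖b' - b‖, norm_nonneg (a' - a), norm_nonneg (b' - b)]
  have hB : ‖b' - b‖ = 0 := by nlinarith [sq_nonneg ‖a' - a‖, sq_nonneg ‖b' - b‖, norm_nonneg (a' - a), norm_nonneg (b' - b)]
  exact ⟨(sub_eq_zero.mp (norm_eq_zero.mp hA)).symm,
    (sub_eq_zero.mp (norm_eq_zero.mp hB)).symm⟩

open scoped Classical in
private lemma nullmeas_of_aemeas_ite {𝔈 : Set ℝ} {c₀ c₁ : ℂ} (hcc : c₀ ≠ c₁)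
    {G : ℝ → ℂ} (hG : AEMeasurable G volume)
    (hval : ∀ t, G t = if t ∈ 𝔈 then c₀ else c₁) :
    NullMeasurableSet 𝔈 (volume : Measure ℝ) := by
  have hE : 𝔈 = G ⁻¹' {c₀} := by
    ext t
    simp only [Set.mem_preimage, Set.mem_singleton_iff, hval t]
    by_cases ht : t ∈ 𝔈 <;> simp [ht, hcc.symm]
  have hmk : MeasurableSet (hG.mk G ⁻¹' {c₀}) :=
    hG.measurable_mk (measurableSet_singleton c₀)
  have hae : hG.mk G ⁻¹' {c₀} =ᵐ[(volume : Measure ℝ)] G ⁻¹' {c₀} := by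
    filter_upwards [hG.ae_eq_mk] with t ht
    show (hG.mk G t = c₀) = (G t = c₀)
    rw [ht]
  rw [hE]
  exact hmk.nullMeasurableSet.congr hae

open scoped Classical in
/-- For densely defined, closed, unbounded, symmetric `T₀ ⊊ T₁` and a
non-Lebesgue-measurable set `𝔈 ⊆ ℝ`, the family equal to `T₀` on `𝔈` and `T₁` off `𝔈`
is weakly measurable but not N-measurable. -/
theorem stmt_7 {H : Type*} [NormedAddCommGroup H] [InnerProductSpace ℂ H]
    [CompleteSpace H] [TopologicalSpace.SeparableSpace H]
    (T₀ T₁ : H →ₗ.[ℂ] H)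
    (hd₀ : Dense (T₀.domain : Set H)) (hc₀ : T₀.IsClosed) (hs₀ : IsSymmPMap T₀)
    (hu₀ : UnboundedPMap T₀)
    (hd₁ : Dense (T₁.domain : Set H)) (hc₁ : T₁.IsClosed) (hs₁ : IsSymmPMap T₁)
    (hu₁ : UnboundedPMap T₁)
    (hle : T₀ ≤ T₁) (hne : T₀ ≠ T₁)
    (𝔈 : Set ℝ) (h𝔈 : ¬ NullMeasurableSet 𝔈 (volume : Measure ℝ)) :
    WeakMeasFam (fun t => if t ∈ 𝔈 then T₀ else T₁) ∧
      ¬ NMeas (fun t => if t ∈ 𝔈 then T₀ else T₁) := by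
  have key : ∀ t : ℝ, (if t ∈ 𝔈 then T₀ else T₁) ≤ T₁ := by
    intro t
    split_ifs with ht
    exacts [hle, le_rfl]
  constructor
  · -- weak measurability
    intro f hf h
    have hmem : ∀ t, ((f t : H)) ∈ T₁.domain := fun t => (key t).1 (f t).2
    have heq : ∀ t, (if t ∈ 𝔈 then T₀ else T₁) (f t) = T₁ ⟨(f t : H), hmem t⟩ :=
      fun t => (key t).2 rfl
    obtain ⟨u, humem, hulim⟩ := mem_closure_iff_seq_limit.mp (hd₁ h)
    apply aemeasurable_of_tendsto_metrizable_ae'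
      (f := fun n t => (inner ℂ (u n) (T₁ ⟨(f t : H), hmem t⟩) : ℂ))
    · intro n
      have hrw : (fun t => (inner ℂ (u n) (T₁ ⟨(f t : H), hmem t⟩) : ℂ))
          = fun t => (inner ℂ (T₁ ⟨u n, humem n⟩) ((f t : H)) : ℂ) :=
        funext fun t => hs₁ ⟨u n, humem n⟩ ⟨(f t : H), hmem t⟩
      rw [hrw]
      exact hf (T₁ ⟨u n, humem n⟩)
    · filter_upwards with t
      have hg : (inner ℂ h ((if t ∈ 𝔈 then T₀ else T₁) (f t)) : ℂ)
          = inner ℂ h (T₁ ⟨(f t : H), hmem t⟩) := by rw [heq t]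
      simp only [hg]
      exact hulim.inner tendsto_const_nhds
  · -- not N-measurable
    rintro ⟨P, hchar, hmeas⟩
    have hEne : 𝔈.Nonempty := by
      rcases 𝔈.eq_empty_or_nonempty with hh | hh
      · exact absurd (by rw [hh]; exact MeasurableSet.empty.nullMeasurableSet) h𝔈
      · exact hh
    have hEcne : 𝔈ᶜ.Nonempty := by
      by_contra hc
      rw [Set.not_nonempty_iff_eq_empty, Set.compl_empty_iff] at hc
      exact h𝔈 (hc ▸ MeasurableSet.univ.nullMeasurableSet)
    obtain ⟨t₀, ht₀⟩ := hEne
    obtain ⟨t₁, ht₁⟩ := hEcne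
    have hdomne : T₀.domain ≠ T₁.domain := fun hd =>
      hne (LinearPMap.eq_of_le_of_domain_eq hle hd)
    obtain ⟨v, hv₁, hv₀⟩ := SetLike.exists_of_lt (lt_of_le_of_ne hle.1 hdomne)
    set x : H := v with hxdef
    set y : H := T₁ ⟨v, hv₁⟩ with hydef
    have hchar₀ : ∀ t, t ∈ 𝔈 → IsCharMatrix T₀ (P t) := by
      intro t ht
      have := hchar t
      simpa [ht] using this
    have hchar₁ : ∀ t, t ∉ 𝔈 → IsCharMatrix T₁ (P t) := by
      intro t ht
      have := hchar t
      simpa [ht] using this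
    have hE_eq : ∀ t, t ∈ 𝔈 →
        P t 0 0 x + P t 0 1 y = P t₀ 0 0 x + P t₀ 0 1 y ∧
        P t 1 0 x + P t 1 1 y = P t₀ 1 0 x + P t₀ 1 1 y := fun t ht =>
      proj_unique ((hchar₀ t ht).1 x y) ((hchar₀ t₀ ht₀).1 x y)
        (fun u => (hchar₀ t ht).2 x y u) (fun u => (hchar₀ t₀ ht₀).2 x y u)
    have hxy_graph : (x, y) ∈ T₁.graph := T₁.mem_graph_iff.mpr ⟨⟨v, hv₁⟩, rfl, rfl⟩
    have hxy_orth : ∀ u : T₁.domain,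
        (inner ℂ (x - x) (u : H) : ℂ) + inner ℂ (y - y) (T₁ u) = 0 := by
      intro u; simp
    have hEc_eq : ∀ t, t ∉ 𝔈 →
        P t 0 0 x + P t 0 1 y = x ∧ P t 1 0 x + P t 1 1 y = y := fun t ht =>
      proj_unique ((hchar₁ t ht).1 x y) hxy_graph
        (fun u => (hchar₁ t ht).2 x y u) hxy_orth
    have hne0 : ¬ (P t₀ 0 0 x + P t₀ 0 1 y = x ∧ P t₀ 1 0 x + P t₀ 1 1 y = y) := by
      rintro ⟨ha, hb⟩
      have hg := (hchar₀ t₀ ht₀).1 x y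
      rw [ha, hb] at hg
      obtain ⟨u, hu1, hu2⟩ := T₀.mem_graph_iff.mp hg
      have hu1' : (u : H) = x := hu1
      exact hv₀ (hu1' ▸ u.2)
    rcases not_and_or.mp hne0 with hca | hcb
    · set d : H := P t₀ 0 0 x + P t₀ 0 1 y - x with hd
      have hdne : d ≠ 0 := sub_ne_zero.mpr hca
      apply h𝔈
      refine nullmeas_of_aemeas_ite (c₀ := (inner ℂ d (P t₀ 0 0 x + P t₀ 0 1 y) : ℂ))
        (c₁ := (inner ℂ d x : ℂ)) ?_ ((hmeas 0 0 d x).add (hmeas 0 1 d y)) ?_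
      · intro hc
        apply hdne
        rw [← inner_self_eq_zero (𝕜 := ℂ) (x := d)]
        calc (inner ℂ d d : ℂ)
            = inner ℂ d (P t₀ 0 0 x + P t₀ 0 1 y) - inner ℂ d x := by
              rw [← inner_sub_right]
          _ = 0 := by rw [hc, sub_self]
      · intro t
        by_cases ht : t ∈ 𝔈
        · simp only [Pi.add_apply]; rw [← inner_add_right, (hE_eq t ht).1, if_pos ht]
        · simp only [Pi.add_apply]; rw [← inner_add_right, (hEc_eq t ht).1, if_neg ht]
    · set d : H := P t₀ 1 0 x + P t₀ 1 1 y - y with hd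
      have hdne : d ≠ 0 := sub_ne_zero.mpr hcb
      apply h𝔈
      refine nullmeas_of_aemeas_ite (c₀ := (inner ℂ d (P t₀ 1 0 x + P t₀ 1 1 y) : ℂ))
        (c₁ := (inner ℂ d y : ℂ)) ?_ ((hmeas 1 0 d x).add (hmeas 1 1 d y)) ?_
      · intro hc
        apply hdne
        rw [← inner_self_eq_zero (𝕜 := ℂ) (x := d)]
        calc (inner ℂ d d : ℂ)
            = inner ℂ d (P t₀ 1 0 x + P t₀ 1 1 y) - inner ℂ d y := by
              rw [← inner_sub_right]
          _ = 0 := by rw [hc, sub_self]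
      · intro t
        by_cases ht : t ∈ 𝔈
        · simp only [Pi.add_apply]; rw [← inner_add_right, (hE_eq t ht).2, if_pos ht]
        · simp only [Pi.add_apply]; rw [← inner_add_right, (hEc_eq t ht).2, if_neg ht]

end
end

section
/- Let H be a complex Hilbert space and let T₀ and T₁ be densely defined closed linear operators in H with T₀ ⊊ T₁ (T₀ ⊆ T₁ and T₀ ≠ T₁). For j = 0, 1 let B_j ∈ B(H) be the bounded operator with B_j = (T_j*T_j + I)^{−1}, i.e., for every x ∈ H: B_j x ∈ dom(T_j), T_j B_j x ∈ dom(T_j*), and T_j*T_j B_j x + B_j x = x. Then B₀ ≠ B₁, and moreover there exists a nonzero h ∈ H such that ⟨h, B₀ h⟩_H ≠ ⟨h, B₁ h⟩_H. -/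
open MeasureTheory

noncomputable section

variable {H : Type*} [NormedAddCommGroup H] [InnerProductSpace ℂ H]

private lemma key_ident {H : Type*} [NormedAddCommGroup H] [InnerProductSpace ℂ H]
    [CompleteSpace H] {T : H →ₗ.[ℂ] H} (hd : Dense (T.domain : Set H))
    {B : H →L[ℂ] H} (hB : IsInvTstarTAddI T B) (x : H) (u : T.domain)
    (h1 : B x ∈ T.domain) :
    (inner ℂ (T ⟨B x, h1⟩) (T u) : ℂ) + inner ℂ (B x) (u : H) = inner ℂ x (u : H) := by
  obtain ⟨h1', h2, heq⟩ := hB x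
  have hTT : (⟨B x, h1⟩ : T.domain) = ⟨B x, h1'⟩ := rfl
  rw [hTT]
  have hadj := LinearPMap.adjoint_isFormalAdjoint hd ⟨T ⟨B x, h1'⟩, h2⟩ u
  calc (inner ℂ (T ⟨B x, h1'⟩) (T u) : ℂ) + inner ℂ (B x) (u : H)
      = inner ℂ (T.adjoint ⟨T ⟨B x, h1'⟩, h2⟩) (u : H) + inner ℂ (B x) (u : H) := by rw [hadj]
    _ = inner ℂ (T.adjoint ⟨T ⟨B x, h1'⟩, h2⟩ + B x) (u : H) := by rw [inner_add_left]
    _ = inner ℂ x (u : H) := by rw [heq]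

private lemma eq_of_B_eq {H : Type*} [NormedAddCommGroup H] [InnerProductSpace ℂ H]
    [CompleteSpace H] (T₀ T₁ : H →ₗ.[ℂ] H)
    (hd₁ : Dense (T₁.domain : Set H)) (hc₀ : T₀.IsClosed) (hc₁ : T₁.IsClosed)
    (hle : T₀ ≤ T₁)
    (B : H →L[ℂ] H)
    (hB₀ : IsInvTstarTAddI T₀ B) (hB₁ : IsInvTstarTAddI T₁ B) :
    T₀ = T₁ := by
  set E := WithLp 2 (H × H) with hE
  let e : E ≃L[ℂ] H × H := WithLp.prodContinuousLinearEquiv 2 ℂ H H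
  let G₁ : Submodule ℂ E := T₁.graph.comap (e.toLinearEquiv : E →ₗ[ℂ] H × H)
  let G₀ : Submodule ℂ E := T₀.graph.comap (e.toLinearEquiv : E →ₗ[ℂ] H × H)
  have hmemG₁ : ∀ z : E, z ∈ G₁ ↔ e z ∈ T₁.graph := fun z => Iff.rfl
  have hmemG₀ : ∀ z : E, z ∈ G₀ ↔ e z ∈ T₀.graph := fun z => Iff.rfl
  have hG₁closed : IsClosed (G₁ : Set E) := by
    have : (G₁ : Set E) = (e : E → H × H) ⁻¹' (T₁.graph : Set (H × H)) := rfl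
    rw [this]; exact hc₁.preimage e.continuous
  have hG₀closed : IsClosed (G₀ : Set E) := by
    have : (G₀ : Set E) = (e : E → H × H) ⁻¹' (T₀.graph : Set (H × H)) := rfl
    rw [this]; exact hc₀.preimage e.continuous
  haveI : CompleteSpace G₁ := hG₁closed.completeSpace_coe
  -- the generating vectors
  have hBx : ∀ x : H, B x ∈ T₀.domain := fun x => (hB₀ x).choose
  let C : H → H := fun x => T₀ ⟨B x, hBx x⟩
  have hBx₁ : ∀ x : H, B x ∈ T₁.domain := fun x => hle.1 (hBx x)
  have hC₁ : ∀ x : H, T₁ ⟨B x, hBx₁ x⟩ = C x := fun x => (hle.2 rfl).symm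
  let g : H → E := fun x => e.symm (B x, C x)
  have hge : ∀ x, e (g x) = (B x, C x) := fun x => e.apply_symm_apply _
  have hgG₀ : ∀ x, g x ∈ G₀ := by
    intro x
    rw [hmemG₀, hge]
    exact T₀.mem_graph ⟨B x, hBx x⟩
  have hgG₁ : ∀ x, g x ∈ G₁ := by
    intro x
    rw [hmemG₁, hge, ← hC₁ x]
    exact T₁.mem_graph ⟨B x, hBx₁ x⟩
  -- inner ℂ products with graph elements
  have hinner : ∀ (x : H) (u : T₁.domain),
      (inner ℂ (g x) (e.symm ((u : H), T₁ u)) : ℂ) = inner ℂ x (u : H) := by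
    intro x u
    have : (inner ℂ (g x) (e.symm ((u : H), T₁ u)) : ℂ)
        = inner ℂ (B x) (u : H) + inner ℂ (C x) (T₁ u) := rfl
    rw [this, ← hC₁ x]
    have := key_ident hd₁ hB₁ x u (hBx₁ x)
    linear_combination this
  -- the span inside G₁
  let g' : H → G₁ := fun x => ⟨g x, hgG₁ x⟩
  let K : Submodule ℂ G₁ := Submodule.span ℂ (Set.range g')
  have hKdense : K.topologicalClosure = ⊤ := by
    rw [Submodule.topologicalClosure_eq_top_iff]
    rw [Submodule.eq_bot_iff]
    intro w hw
    obtain ⟨y, hy⟩ := T₁.mem_graph_iff'.mp ((hmemG₁ w.1).mp w.2)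
    have hw0 : (w : E) = e.symm ((y : H), T₁ y) := by
      rw [hy]; exact (e.symm_apply_apply _).symm
    have horto : ∀ x : H, (inner ℂ x ((y : H)) : ℂ) = 0 := by
      intro x
      have h1 : (inner ℂ (g' x : E) (w : E) : ℂ) = 0 := by
        have := (Submodule.mem_orthogonal K w).mp hw (g' x) (Submodule.subset_span ⟨x, rfl⟩)
        exact this
      have h2 : (inner ℂ (g' x : E) (w : E) : ℂ) = inner ℂ x ((y : H)) := by
        have : (inner ℂ (g' x : E) (w : E) : ℂ) = inner ℂ (g x) (e.symm ((y : H), T₁ y)) := by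
          rw [← hw0]
        rw [this, hinner x y]
      rw [← h2, h1]
    have hy0 : (y : H) = 0 := by
      have := horto ((y : H))
      rwa [inner_self_eq_zero] at this
    have hy0' : y = 0 := Subtype.ext hy0
    have : (w : E) = 0 := by
      rw [hw0, hy0']
      simp
    exact Subtype.ext this
  -- now: every element of G₁ lies in G₀
  have hsub : (G₁ : Set E) ⊆ (G₀ : Set E) := by
    intro z hz
    have hz' : (⟨z, hz⟩ : G₁) ∈ (⊤ : Submodule ℂ G₁) := Submodule.mem_top
    rw [← hKdense] at hz'
    have hcl : (⟨z, hz⟩ : G₁) ∈ closure (K : Set G₁) := by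
      rw [← Submodule.topologicalClosure_coe]; exact hz'
    have himg : z ∈ closure (Subtype.val '' (K : Set G₁)) := by
      have := image_closure_subset_closure_image (f := (Subtype.val : G₁ → E))
        continuous_subtype_val (s := (K : Set G₁))
      exact this ⟨_, hcl, rfl⟩
    have hKsub : Subtype.val '' (K : Set G₁) ⊆ (G₀ : Set E) := by
      rintro _ ⟨v, hv, rfl⟩
      have : (v : E) ∈ Submodule.map G₁.subtype K := ⟨v, hv, rfl⟩
      rw [Submodule.map_span] at this
      have hrange : (G₁.subtype '' Set.range g') ⊆ (G₀ : Set E) := by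
        rintro _ ⟨_, ⟨x, rfl⟩, rfl⟩
        exact hgG₀ x
      exact Submodule.span_le.mpr hrange this
    exact (hG₀closed.closure_subset_iff.mpr hKsub) himg
  -- conclude T₁ ≤ T₀
  refine le_antisymm hle (LinearPMap.le_of_le_graph ?_)
  intro p hp
  have : e.symm p ∈ G₁ := by rw [hmemG₁, e.apply_symm_apply]; exact hp
  have h3 : e.symm p ∈ G₀ := hsub this
  rw [hmemG₀, e.apply_symm_apply] at h3
  exact h3

/-- If `T₀ ⊊ T₁` are densely defined closed operators and
`B_j = (T_j⋆ T_j + I)⁻¹`, then `B₀ ≠ B₁`, and indeed `⟪h, B₀ h⟫ ≠ ⟪h, B₁ h⟫` for some `h ≠ 0`. -/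
theorem stmt_8 {H : Type*} [NormedAddCommGroup H] [InnerProductSpace ℂ H] [CompleteSpace H]
    (T₀ T₁ : H →ₗ.[ℂ] H)
    (hd₀ : Dense (T₀.domain : Set H)) (hc₀ : T₀.IsClosed)
    (hd₁ : Dense (T₁.domain : Set H)) (hc₁ : T₁.IsClosed)
    (hle : T₀ ≤ T₁) (hne : T₀ ≠ T₁)
    (B₀ B₁ : H →L[ℂ] H)
    (hB₀ : IsInvTstarTAddI T₀ B₀) (hB₁ : IsInvTstarTAddI T₁ B₁) :
    B₀ ≠ B₁ ∧ ∃ h : H, h ≠ 0 ∧ (inner ℂ h (B₀ h) : ℂ) ≠ (inner ℂ h (B₁ h) : ℂ) := by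
  have hmain : B₀ ≠ B₁ := by
    intro hBeq
    exact hne (eq_of_B_eq T₀ T₁ hd₁ hc₀ hc₁ hle B₀ hB₀ (by rw [hBeq]; exact hB₁))
  refine ⟨hmain, ?_⟩
  by_contra hcon
  push_neg at hcon
  apply hmain
  have hall : ∀ h : H, (inner ℂ (((B₀ - B₁ : H →L[ℂ] H) : H →ₗ[ℂ] H) h) h : ℂ) = 0 := by
    intro h
    by_cases hh : h = 0
    · simp [hh]
    · have h1 := hcon h hh
      have h2 : (inner ℂ h (B₀ h - B₁ h) : ℂ) = 0 := by
        rw [inner_sub_right, h1, sub_self]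
      have h3 := congrArg (starRingEnd ℂ) h2
      rw [inner_conj_symm] at h3
      simpa [inner_sub_left] using h3
  have h4 : ((B₀ - B₁ : H →L[ℂ] H) : H →ₗ[ℂ] H) = 0 :=
    (inner_map_self_eq_zero _).mp hall
  have h5 : (B₀ - B₁ : H →L[ℂ] H) = 0 := by
    ext x
    exact DFunLike.congr_fun h4 x
  rw [sub_eq_zero] at h5
  exact h5

end
end

section
/- Let H be a separable complex Hilbert space, let A₀ be a densely defined closed symmetric operator in H, let A₁ be a self-adjoint extension of A₀ (A₀ ⊆ A₁ = A₁*), and let e ∈ dom(A₀*) be a unit vector with A₀* e = i e. Set T₁ = A₁ + iI with dom(T₁) = dom(A₁), K = I + ⟨e,·⟩_H e ∈ B(H), and T₂ = K T₁ with dom(T₂) = dom(T₁). Let 𝔈 ⊆ ℝ be a set that is not Lebesgue measurable, and define T̃(t) = T₁* for t ∈ 𝔈 and T̃(t) = T₂* for t ∈ ℝ∖𝔈. Then {T̃(t)}_{t∈ℝ} is a family of densely defined closed operators that is weakly measurable, but the family of adjoints {T̃(t)*}_{t∈ℝ} is not weakly measurable. -/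
open MeasureTheory

noncomputable section

variable {H : Type*} [NormedAddCommGroup H] [InnerProductSpace ℂ H]

local notation "⟪" x ", " y "⟫" => @inner ℂ _ _ x y

theorem aux_adjoint_isClosed {G : Type*} [NormedAddCommGroup G] [InnerProductSpace ℂ G]
    [CompleteSpace G] (T : G →ₗ.[ℂ] G) (hT : Dense (T.domain : Set G)) :
    T.adjoint.IsClosed := by
  have hset : (T.adjoint.graph : Set (G × G)) =
      ⋂ x : T.domain, {p : G × G | ⟪p.2, (x : G)⟫ = ⟪p.1, T x⟫} := by
    ext p
    simp only [Set.mem_iInter, Set.mem_setOf_eq, SetLike.mem_coe, LinearPMap.mem_graph_iff]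
    constructor
    · rintro ⟨y, hy1, hy2⟩ x
      rw [← hy1, ← hy2]
      exact LinearPMap.adjoint_isFormalAdjoint hT y x
    · intro hp
      have hdom : p.1 ∈ T.adjoint.domain :=
        LinearPMap.mem_adjoint_domain_of_exists _ ⟨p.2, fun x => hp x⟩
      exact ⟨⟨p.1, hdom⟩, rfl, LinearPMap.adjoint_apply_eq hT _ fun x => hp x⟩
  rw [LinearPMap.IsClosed, hset]
  exact isClosed_iInter fun x =>
    isClosed_eq (continuous_snd.inner continuous_const) (continuous_fst.inner continuous_const)

open scoped Classical in
/-- With `A₀` densely defined closed symmetric, `A₁` a self-adjoint extension,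
`e` a unit vector with `A₀⋆ e = i e`, `T₁ = A₁ + iI`, `K = I + ⟪e,·⟫e`, `T₂ = K T₁`, and `𝔈`
a non-Lebesgue-measurable set, the family `T̃ t = T₁⋆` on `𝔈`, `T₂⋆` off `𝔈`, consists of densely
defined closed operators, is weakly measurable, but the adjoint family `{T̃ t⋆}` is not weakly
measurable. -/
theorem stmt_10 {H : Type*} [NormedAddCommGroup H] [InnerProductSpace ℂ H]
    [CompleteSpace H] [TopologicalSpace.SeparableSpace H]
    (A₀ A₁ : H →ₗ.[ℂ] H)
    (hd₀ : Dense (A₀.domain : Set H)) (hc₀ : A₀.IsClosed) (hs₀ : IsSymmPMap A₀)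
    (hext : A₀ ≤ A₁) (hsa₁ : IsSelfAdjoint A₁)
    (e : H) (he : ‖e‖ = 1)
    (hedom : e ∈ A₀.adjoint.domain)
    (heeq : A₀.adjoint ⟨e, hedom⟩ = Complex.I • e)
    (T₁ : H →ₗ.[ℂ] H) (hT₁dom : T₁.domain = A₁.domain)
    (hT₁ : ∀ (x : H) (hx : x ∈ T₁.domain) (hx' : x ∈ A₁.domain),
      T₁ ⟨x, hx⟩ = A₁ ⟨x, hx'⟩ + Complex.I • x)
    (K : H →L[ℂ] H) (hK : ∀ x : H, K x = x + (inner ℂ e x : ℂ) • e)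
    (T₂ : H →ₗ.[ℂ] H) (hT₂dom : T₂.domain = T₁.domain)
    (hT₂ : ∀ (x : H) (hx : x ∈ T₂.domain) (hx' : x ∈ T₁.domain),
      T₂ ⟨x, hx⟩ = K (T₁ ⟨x, hx'⟩))
    (𝔈 : Set ℝ) (h𝔈 : ¬ NullMeasurableSet 𝔈 (volume : Measure ℝ)) :
    (∀ t : ℝ,
      Dense (((if t ∈ 𝔈 then T₁.adjoint else T₂.adjoint) : H →ₗ.[ℂ] H).domain : Set H) ∧
      ((if t ∈ 𝔈 then T₁.adjoint else T₂.adjoint) : H →ₗ.[ℂ] H).IsClosed) ∧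
    WeakMeasFam (fun t => if t ∈ 𝔈 then T₁.adjoint else T₂.adjoint) ∧
    ¬ WeakMeasFam (fun t =>
        ((if t ∈ 𝔈 then T₁.adjoint else T₂.adjoint) : H →ₗ.[ℂ] H).adjoint) := by
  have hsa' : A₁.adjoint = A₁ := hsa₁
  have hdA₁ : Dense (A₁.domain : Set H) := hsa₁.dense_domain
  have FA₁ : A₁.IsFormalAdjoint A₁ := by
    have := LinearPMap.adjoint_isFormalAdjoint (T := A₁) hdA₁
    rwa [hsa'] at this
  have hdT₁ : Dense (T₁.domain : Set H) := by rw [hT₁dom]; exact hdA₁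
  have hdT₂ : Dense (T₂.domain : Set H) := by rw [hT₂dom]; exact hdT₁
  have FA₀ := LinearPMap.adjoint_isFormalAdjoint (T := A₀) hd₀
  have hee : (⟪e, e⟫ : ℂ) = 1 := by
    rw [inner_self_eq_norm_sq_to_K, he]; norm_num
  -- ⟪e, T₁ x⟫ = 0 for x in dom A₀
  have hzero : ∀ (x : T₁.domain), (x : H) ∈ A₀.domain → ⟪e, T₁ x⟫ = 0 := by
    intro x hx0
    have hxA : (x : H) ∈ A₁.domain := hT₁dom ▸ x.2
    have h1 : T₁ x = A₁ ⟨x, hxA⟩ + Complex.I • (x : H) := hT₁ x.1 x.2 hxA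
    have h2 : A₀ ⟨(x : H), hx0⟩ = A₁ ⟨(x : H), hxA⟩ := hext.2 rfl
    have h3 : ⟪A₀.adjoint ⟨e, hedom⟩, ((⟨(x : H), hx0⟩ : A₀.domain) : H)⟫
        = ⟪e, A₀ ⟨(x : H), hx0⟩⟫ := FA₀ ⟨e, hedom⟩ ⟨(x : H), hx0⟩
    rw [heeq, inner_smul_left, Complex.conj_I] at h3
    rw [h1, inner_add_right, ← h2, ← h3, inner_smul_right]
    ring
  -- the inner-product identity used for adjoint domain membership
  have hT₁pair : ∀ (y : H) (hy : y ∈ A₁.domain) (x : T₁.domain),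
      ⟪A₁ ⟨y, hy⟩ - Complex.I • y, (x : H)⟫ = ⟪y, T₁ x⟫ := by
    intro y hy x
    have hxA : (x : H) ∈ A₁.domain := hT₁dom ▸ x.2
    have h1 : T₁ x = A₁ ⟨x, hxA⟩ + Complex.I • (x : H) := hT₁ x.1 x.2 hxA
    have h2 := FA₁ ⟨y, hy⟩ ⟨(x : H), hxA⟩
    rw [h1, inner_add_right, inner_smul_right, inner_sub_left, inner_smul_left, Complex.conj_I,
      ← h2]
    ring
  have hsub₁ : (A₁.domain : Set H) ⊆ (T₁.adjoint.domain : Set H) := fun y hy =>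
    LinearPMap.mem_adjoint_domain_of_exists _
      ⟨A₁ ⟨y, hy⟩ - Complex.I • y, fun x => hT₁pair y hy x⟩
  have hdadj₁ : Dense (T₁.adjoint.domain : Set H) := hdA₁.mono hsub₁
  have hKsa : ∀ y u : H, ⟪y, K u⟫ = ⟪K y, u⟫ := by
    intro y u
    rw [hK, hK, inner_add_right, inner_add_left, inner_smul_right, inner_smul_left,
      ← inner_conj_symm y e]
    ring
  have hmem₂ : ∀ y : H, K y ∈ A₁.domain → y ∈ T₂.adjoint.domain := by
    intro y hy
    apply LinearPMap.mem_adjoint_domain_of_exists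
    refine ⟨A₁ ⟨K y, hy⟩ - Complex.I • (K y), fun x => ?_⟩
    have hx1 : (x : H) ∈ T₁.domain := hT₂dom ▸ x.2
    have h1 : T₂ x = K (T₁ ⟨(x : H), hx1⟩) := hT₂ x.1 x.2 hx1
    rw [h1, hKsa, hT₁pair (K y) hy ⟨(x : H), hx1⟩]
  have hdadj₂ : Dense (T₂.adjoint.domain : Set H) := by
    intro v
    have h1 : K v ∈ closure (A₁.domain : Set H) := hdA₁ _
    have hLcont : Continuous fun x : H => x - ((⟪e, x⟫ / 2) • e) := by
      refine continuous_id.sub (Continuous.smul ?_ continuous_const)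
      exact (continuous_const.inner continuous_id).div_const 2
    have hLK : (fun x : H => x - ((⟪e, x⟫ / 2) • e)) (K v) = v := by
      show K v - ((⟪e, K v⟫ / 2) • e) = v
      rw [hK, inner_add_right, inner_smul_right, hee]
      module
    have h2 : v ∈ (fun x : H => x - ((⟪e, x⟫ / 2) • e)) '' closure (A₁.domain : Set H) :=
      ⟨K v, h1, hLK⟩
    have h3 := image_closure_subset_closure_image hLcont h2
    refine closure_mono ?_ h3
    rintro w ⟨x, hx, rfl⟩
    apply hmem₂
    have : K (x - ((⟪e, x⟫ / 2) • e)) = x := by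
      rw [hK, inner_sub_right, inner_smul_right, hee]
      module
    rw [this]; exact hx
  refine ⟨?_, ?_, ?_⟩
  · intro t
    by_cases ht : t ∈ 𝔈
    · rw [if_pos ht]
      exact ⟨hdadj₁, aux_adjoint_isClosed T₁ hdT₁⟩
    · rw [if_neg ht]
      exact ⟨hdadj₂, aux_adjoint_isClosed T₂ hdT₂⟩
  · intro f hf
    have key : ∀ (h₀ : H) (hh : h₀ ∈ A₀.domain) (t : ℝ),
        (⟪h₀, (if t ∈ 𝔈 then T₁.adjoint else T₂.adjoint) (f t)⟫ : ℂ)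
          = ⟪T₁ ⟨h₀, hT₁dom.symm ▸ hext.1 hh⟩, ((f t : H))⟫ := by
      intro h₀ hh t
      have hmemT : h₀ ∈ T₁.domain := hT₁dom.symm ▸ hext.1 hh
      have hg : ((f t : H), (if t ∈ 𝔈 then T₁.adjoint else T₂.adjoint) (f t)) ∈
          (if t ∈ 𝔈 then T₁.adjoint else T₂.adjoint).graph := LinearPMap.mem_graph _ (f t)
      generalize hv : (if t ∈ 𝔈 then T₁.adjoint else T₂.adjoint) (f t) = v at hg ⊢
      generalize hw : ((f t : H)) = w at hg ⊢
      by_cases ht : t ∈ 𝔈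
      · rw [if_pos ht] at hg
        obtain ⟨y, hy1, hy2⟩ := (LinearPMap.mem_graph_iff _).mp hg
        have hy1' : (y : H) = w := hy1
        have hy2' : T₁.adjoint y = v := hy2
        have hfa := LinearPMap.adjoint_isFormalAdjoint hdT₁ y ⟨h₀, hmemT⟩
        rw [← hy2', ← hy1', ← inner_conj_symm, hfa, inner_conj_symm]
      · rw [if_neg ht] at hg
        obtain ⟨y, hy1, hy2⟩ := (LinearPMap.mem_graph_iff _).mp hg
        have hmemT2 : h₀ ∈ T₂.domain := hT₂dom.symm ▸ hmemT
        have hfa := LinearPMap.adjoint_isFormalAdjoint hdT₂ y ⟨h₀, hmemT2⟩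
        have hval : T₂ ⟨h₀, hmemT2⟩ = T₁ ⟨h₀, hmemT⟩ := by
          rw [hT₂ h₀ hmemT2 hmemT, hK, hzero ⟨h₀, hmemT⟩ hh, zero_smul, add_zero]
        have hy1' : (y : H) = w := hy1
        have hy2' : T₂.adjoint y = v := hy2
        rw [← hy2', ← hy1', ← inner_conj_symm, hfa, hval, inner_conj_symm]
    intro h
    obtain ⟨u, hu1, hu2⟩ := mem_closure_iff_seq_limit.mp (hd₀ h)
    refine aemeasurable_of_tendsto_metrizable_ae' (f := fun n t =>
        (⟪u n, (if t ∈ 𝔈 then T₁.adjoint else T₂.adjoint) (f t)⟫ : ℂ)) (fun n => ?_) ?_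
    · have hkn := key (u n) (hu1 n)
      simp only [hkn]
      exact hf _
    · refine Filter.Eventually.of_forall fun t => ?_
      exact Filter.Tendsto.inner hu2 tendsto_const_nhds
  · intro hWM
    have hex : ∃ x : T₁.domain, (⟪e, T₁ x⟫ : ℂ) ≠ 0 := by
      by_contra hc
      push_neg at hc
      have hmem : e ∈ A₁.adjoint.domain := by
        apply LinearPMap.mem_adjoint_domain_of_exists
        refine ⟨Complex.I • e, fun x => ?_⟩
        have hxT : (x : H) ∈ T₁.domain := hT₁dom.symm ▸ x.2
        have h1 := hc ⟨(x : H), hxT⟩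
        rw [hT₁ x.1 hxT x.2, inner_add_right, inner_smul_right] at h1
        rw [inner_smul_left, Complex.conj_I]
        linear_combination -h1
      have hmem' : e ∈ A₁.domain := by
        have hde : A₁.adjoint.domain = A₁.domain := congrArg LinearPMap.domain hsa'
        rw [← hde]; exact hmem
      have h1 := hc ⟨e, hT₁dom.symm ▸ hmem'⟩
      rw [hT₁ e (hT₁dom.symm ▸ hmem') hmem', inner_add_right, inner_smul_right, hee,
        mul_one] at h1
      have hz : (⟪e, A₁ ⟨e, hmem'⟩⟫ : ℂ) = -Complex.I := by linear_combination h1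
      have h2 := FA₁ ⟨e, hmem'⟩ ⟨e, hmem'⟩
      have h3 : (starRingEnd ℂ) (⟪e, A₁ ⟨e, hmem'⟩⟫ : ℂ) = ⟪e, A₁ ⟨e, hmem'⟩⟫ := by
        rw [inner_conj_symm]; exact h2
      rw [hz] at h3
      simp [Complex.ext_iff] at h3
      norm_num at h3
    obtain ⟨x₀, hc0⟩ := hex
    have hx₀T₂ : (x₀ : H) ∈ T₂.domain := hT₂dom.symm ▸ x₀.2
    have hle₁ : T₁ ≤ T₁.adjoint.adjoint :=
      LinearPMap.IsFormalAdjoint.le_adjoint hdadj₁ (LinearPMap.adjoint_isFormalAdjoint hdT₁)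
    have hle₂ : T₂ ≤ T₂.adjoint.adjoint :=
      LinearPMap.IsFormalAdjoint.le_adjoint hdadj₂ (LinearPMap.adjoint_isFormalAdjoint hdT₂)
    have memf : ∀ t : ℝ,
        (x₀ : H) ∈ ((if t ∈ 𝔈 then T₁.adjoint else T₂.adjoint).adjoint).domain := by
      intro t
      by_cases ht : t ∈ 𝔈
      · rw [if_pos ht]; exact hle₁.1 x₀.2
      · rw [if_neg ht]; exact hle₂.1 hx₀T₂
    have hfm : WeakMeasVec (fun t : ℝ =>
        ((⟨(x₀ : H), memf t⟩ :
          ((if t ∈ 𝔈 then T₁.adjoint else T₂.adjoint).adjoint).domain) : H)) :=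
      fun h => by
        exact (aemeasurable_const : AEMeasurable (fun _ : ℝ => (⟪h, (x₀ : H)⟫ : ℂ)) volume)
    have hmeas : AEMeasurable (fun t : ℝ =>
        (⟪e, ((if t ∈ 𝔈 then T₁.adjoint else T₂.adjoint).adjoint) ⟨(x₀ : H), memf t⟩⟫ : ℂ))
        volume := hWM (fun t => ⟨(x₀ : H), memf t⟩) hfm e
    have heqfun : (fun t : ℝ =>
        (⟪e, ((if t ∈ 𝔈 then T₁.adjoint else T₂.adjoint).adjoint) ⟨(x₀ : H), memf t⟩⟫ : ℂ))
        = fun t => if t ∈ 𝔈 then (⟪e, T₁ x₀⟫ : ℂ) else 2 * ⟪e, T₁ x₀⟫ := by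
      funext t
      have hg := LinearPMap.mem_graph ((if t ∈ 𝔈 then T₁.adjoint else T₂.adjoint).adjoint)
        ⟨(x₀ : H), memf t⟩
      generalize hv :
        ((if t ∈ 𝔈 then T₁.adjoint else T₂.adjoint).adjoint) ⟨(x₀ : H), memf t⟩ = v at hg ⊢
      have hg' : ((x₀ : H), v) ∈ ((if t ∈ 𝔈 then T₁.adjoint else T₂.adjoint).adjoint).graph := hg
      by_cases ht : t ∈ 𝔈
      · rw [if_pos ht] at hg' ⊢
        obtain ⟨y, hy1, hy2⟩ := (LinearPMap.mem_graph_iff _).mp hg'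
        have hy1' : (y : H) = (x₀ : H) := hy1
        have hy2' : T₁.adjoint.adjoint y = v := hy2
        have hval : T₁ x₀ = T₁.adjoint.adjoint y := hle₁.2 hy1'.symm
        rw [← hy2', ← hval]
      · rw [if_neg ht] at hg' ⊢
        obtain ⟨y, hy1, hy2⟩ := (LinearPMap.mem_graph_iff _).mp hg'
        have hy1' : (y : H) = (x₀ : H) := hy1
        have hy2' : T₂.adjoint.adjoint y = v := hy2
        have hval : T₂ ⟨(x₀ : H), hx₀T₂⟩ = T₂.adjoint.adjoint y := hle₂.2 hy1'.symm
        have hxe : T₁ ⟨(x₀ : H), x₀.2⟩ = T₁ x₀ := rfl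
        rw [← hy2', ← hval, hT₂ x₀.1 hx₀T₂ x₀.2, hK, inner_add_right, inner_smul_right, hee,
          mul_one, hxe]
        ring
    rw [heqfun] at hmeas
    have hset : (fun t => if t ∈ 𝔈 then (⟪e, T₁ x₀⟫ : ℂ) else 2 * ⟪e, T₁ x₀⟫) ⁻¹'
        {(⟪e, T₁ x₀⟫ : ℂ)} = 𝔈 := by
      ext t
      by_cases ht : t ∈ 𝔈
      · simp [ht]
      · simp only [Set.mem_preimage, Set.mem_singleton_iff, if_neg ht]
        constructor
        · intro hcontra; exact absurd (by linear_combination hcontra) hc0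
        · intro hcontra; exact absurd hcontra ht
    exact h𝔈 (hset ▸ (hmeas.nullMeasurable (measurableSet_singleton _)))

end
end

section
/- Let H be a separable complex Hilbert space, let A₀ be a densely defined closed symmetric operator in H, let A₁ be a self-adjoint extension of A₀, and let e ∈ dom(A₀*) be a unit vector with A₀* e = i e. Set T₁ = A₁ + iI with dom(T₁) = dom(A₁), K = I + ⟨e,·⟩_H e ∈ B(H), and T₂ = K T₁ with dom(T₂) = dom(T₁). Then dom(T₁*) ∩ dom(T₂*) = {g ∈ dom(T₁*) : ⟨e, g⟩_H = 0}; in particular, the closure of dom(T₁*) ∩ dom(T₂*) has codimension one in H. -/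
open MeasureTheory

noncomputable section

variable {H : Type*} [NormedAddCommGroup H] [InnerProductSpace ℂ H]

/-- In the setting of Example 4.2 (Statement 10),
`dom T₁⋆ ∩ dom T₂⋆ = {g ∈ dom T₁⋆ : ⟪e, g⟫ = 0}`; in particular the closure of
`dom T₁⋆ ∩ dom T₂⋆` has codimension one in `H`. -/
theorem stmt_11 {H : Type*} [NormedAddCommGroup H] [InnerProductSpace ℂ H]
    [CompleteSpace H] [TopologicalSpace.SeparableSpace H]
    (A₀ A₁ : H →ₗ.[ℂ] H)
    (hd₀ : Dense (A₀.domain : Set H)) (hc₀ : A₀.IsClosed) (hs₀ : IsSymmPMap A₀)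
    (hext : A₀ ≤ A₁) (hsa₁ : IsSelfAdjoint A₁)
    (e : H) (he : ‖e‖ = 1)
    (hedom : e ∈ A₀.adjoint.domain)
    (heeq : A₀.adjoint ⟨e, hedom⟩ = Complex.I • e)
    (T₁ : H →ₗ.[ℂ] H) (hT₁dom : T₁.domain = A₁.domain)
    (hT₁ : ∀ (x : H) (hx : x ∈ T₁.domain) (hx' : x ∈ A₁.domain),
      T₁ ⟨x, hx⟩ = A₁ ⟨x, hx'⟩ + Complex.I • x)
    (K : H →L[ℂ] H) (hK : ∀ x : H, K x = x + (inner ℂ e x : ℂ) • e)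
    (T₂ : H →ₗ.[ℂ] H) (hT₂dom : T₂.domain = T₁.domain)
    (hT₂ : ∀ (x : H) (hx : x ∈ T₂.domain) (hx' : x ∈ T₁.domain),
      T₂ ⟨x, hx⟩ = K (T₁ ⟨x, hx'⟩)) :
    ((T₁.adjoint.domain ⊓ T₂.adjoint.domain : Submodule ℂ H) : Set H)
        = {g : H | g ∈ T₁.adjoint.domain ∧ (inner ℂ e g : ℂ) = 0} ∧
      Module.finrank ℂ
        (H ⧸ (T₁.adjoint.domain ⊓ T₂.adjoint.domain).topologicalClosure) = 1 := by
  classical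
  have hA1adj : A₁.adjoint = A₁ := hsa₁
  have hA1d : Dense (A₁.domain : Set H) := hsa₁.dense_domain
  have hA1domeq : A₁.adjoint.domain = A₁.domain := congrArg LinearPMap.domain hA1adj
  have hT1d : Dense (T₁.domain : Set H) := by rw [hT₁dom]; exact hA1d
  have hT2d : Dense (T₂.domain : Set H) := by rw [hT₂dom]; exact hT1d
  have hle : A₁ ≤ A₁.adjoint := le_of_eq hA1adj.symm
  have hfa : A₁.adjoint.IsFormalAdjoint A₁ := LinearPMap.adjoint_isFormalAdjoint hA1d
  -- symmetry of A₁
  have hsymm : ∀ (x y : H) (hx : x ∈ A₁.domain) (hy : y ∈ A₁.domain),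
      (inner ℂ (A₁ ⟨x, hx⟩) y : ℂ) = inner ℂ x (A₁ ⟨y, hy⟩) := by
    intro x y hx hy
    have hx' : x ∈ A₁.adjoint.domain := hA1domeq.symm ▸ hx
    have h1 := hfa ⟨x, hx'⟩ ⟨y, hy⟩
    have h2 : A₁ ⟨x, hx⟩ = A₁.adjoint ⟨x, hx'⟩ := hle.2 rfl
    rw [h2]; exact h1
  -- A₁ ≤ A₀†
  have hfa0 : A₀.IsFormalAdjoint A₁ := by
    rintro ⟨x, hx⟩ ⟨y, hy⟩
    have hx1 : x ∈ A₁.domain := hext.1 hx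
    have hval : A₀ ⟨x, hx⟩ = A₁ ⟨x, hx1⟩ := hext.2 rfl
    rw [hval]
    exact hsymm x y hx1 hy
  have hA1le : A₁ ≤ A₀.adjoint := LinearPMap.IsFormalAdjoint.le_adjoint hd₀ hfa0
  -- e is not in the domain of A₁
  have henot : e ∉ A₁.domain := by
    intro hmem
    have h1 : A₁ ⟨e, hmem⟩ = Complex.I • e := by
      have h2 : A₁ ⟨e, hmem⟩ = A₀.adjoint ⟨e, hedom⟩ := hA1le.2 rfl
      rw [h2, heeq]
    have h2 := hsymm e e hmem hmem
    rw [h1] at h2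
    simp only [inner_smul_left, inner_smul_right, inner_self_eq_norm_sq_to_K, he,
      Complex.conj_I, Complex.ofReal_one, one_pow, mul_one] at h2
    exact Complex.I_ne_zero (by push_cast at h2; linear_combination (-1/2 : ℂ) * h2)
  -- domain of T₁†
  have hmemT1 : ∀ g : H, g ∈ T₁.adjoint.domain ↔ g ∈ A₁.domain := by
    intro g
    constructor
    · intro hg
      have hfaT1 : T₁.adjoint.IsFormalAdjoint T₁ := LinearPMap.adjoint_isFormalAdjoint hT1d
      have hmem : g ∈ A₁.adjoint.domain := by
        apply LinearPMap.mem_adjoint_domain_of_exists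
        refine ⟨T₁.adjoint ⟨g, hg⟩ + Complex.I • g, ?_⟩
        rintro ⟨x, hx⟩
        have hx1 : x ∈ T₁.domain := hT₁dom.symm ▸ hx
        have h1 := hfaT1 ⟨g, hg⟩ ⟨x, hx1⟩
        rw [hT₁ x hx1 hx] at h1
        rw [inner_add_left, inner_smul_left, h1, inner_add_right, inner_smul_right,
          Complex.conj_I]
        ring
      rwa [hA1domeq] at hmem
    · intro hg
      apply LinearPMap.mem_adjoint_domain_of_exists
      refine ⟨A₁ ⟨g, hg⟩ - Complex.I • g, ?_⟩
      rintro ⟨x, hx⟩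
      have hx' : x ∈ A₁.domain := hT₁dom ▸ hx
      rw [hT₁ x hx hx', inner_sub_left, inner_smul_left, inner_add_right, inner_smul_right,
        hsymm g x hg hx', Complex.conj_I]
      ring
  -- K is symmetric
  have hKsymm : ∀ x y : H, (inner ℂ (K x) y : ℂ) = inner ℂ x (K y) := by
    intro x y
    rw [hK, hK, inner_add_left, inner_add_right, inner_smul_left, inner_smul_right,
      ← inner_conj_symm x e]
    ring
  -- domain of T₂†
  have hmemT2 : ∀ g : H, g ∈ T₂.adjoint.domain ↔ K g ∈ T₁.adjoint.domain := by
    intro g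
    constructor
    · intro hg
      apply LinearPMap.mem_adjoint_domain_of_exists
      refine ⟨T₂.adjoint ⟨g, hg⟩, ?_⟩
      rintro ⟨x, hx⟩
      have hx2 : x ∈ T₂.domain := hT₂dom.symm ▸ hx
      have h1 := (LinearPMap.adjoint_isFormalAdjoint hT2d) ⟨g, hg⟩ ⟨x, hx2⟩
      rw [hT₂ x hx2 hx] at h1
      rw [h1, ← hKsymm]
    · intro hKg
      apply LinearPMap.mem_adjoint_domain_of_exists
      refine ⟨T₁.adjoint ⟨K g, hKg⟩, ?_⟩
      rintro ⟨x, hx⟩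
      have hx1 : x ∈ T₁.domain := hT₂dom ▸ hx
      have h1 := (LinearPMap.adjoint_isFormalAdjoint hT1d) ⟨K g, hKg⟩ ⟨x, hx1⟩
      rw [hT₂ x hx hx1, ← hKsymm]
      exact h1
  -- main characterization
  have hmain : ∀ g : H, (g ∈ A₁.domain ∧ K g ∈ A₁.domain) ↔
      (g ∈ A₁.domain ∧ (inner ℂ e g : ℂ) = 0) := by
    intro g
    constructor
    · rintro ⟨h1, h2⟩
      refine ⟨h1, ?_⟩
      by_contra hne
      have hsub : (inner ℂ e g : ℂ) • e ∈ A₁.domain := by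
        have h3 := A₁.domain.sub_mem h2 h1
        rwa [hK, add_sub_cancel_left] at h3
      have h4 := A₁.domain.smul_mem (inner ℂ e g : ℂ)⁻¹ hsub
      rw [smul_smul, inv_mul_cancel₀ hne, one_smul] at h4
      exact henot h4
    · rintro ⟨h1, h2⟩
      refine ⟨h1, ?_⟩
      rw [hK, h2, zero_smul, add_zero]
      exact h1
  have hM : ∀ g : H, g ∈ (T₁.adjoint.domain ⊓ T₂.adjoint.domain : Submodule ℂ H) ↔
      (g ∈ A₁.domain ∧ (inner ℂ e g : ℂ) = 0) := by
    intro g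
    rw [Submodule.mem_inf, hmemT1 g, hmemT2 g, hmemT1 (K g)]
    exact hmain g
  constructor
  · ext g
    simp only [SetLike.mem_coe, Set.mem_setOf_eq]
    rw [hM g, hmemT1 g]
  · -- codimension
    set φ : H →ₗ[ℂ] ℂ := ((innerSL ℂ e : H →L[ℂ] ℂ) : H →ₗ[ℂ] ℂ) with hφdef
    have hφcont : Continuous φ := (innerSL ℂ e).continuous
    have hφapp : ∀ x : H, φ x = (inner ℂ e x : ℂ) := fun x => rfl
    have hφe : φ e = 1 := by
      rw [hφapp, inner_self_eq_norm_sq_to_K, he]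
      norm_num
    -- a vector in dom A₁ not orthogonal to e
    obtain ⟨d₀, hd₀mem, hd₀ne⟩ : ∃ d, d ∈ A₁.domain ∧ (inner ℂ e d : ℂ) ≠ 0 := by
      by_contra hcon
      push_neg at hcon
      have hcl : IsClosed {y : H | (inner ℂ e y : ℂ) = 0} :=
        isClosed_eq hφcont continuous_const
      have hsub : closure (A₁.domain : Set H) ⊆ {y : H | (inner ℂ e y : ℂ) = 0} :=
        closure_minimal (fun y hy => hcon y hy) hcl
      have he0 : (inner ℂ e e : ℂ) = 0 := hsub (hA1d e)
      rw [inner_self_eq_norm_sq_to_K, he] at he0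
      norm_num at he0
    have hMker : (T₁.adjoint.domain ⊓ T₂.adjoint.domain).topologicalClosure
        = LinearMap.ker φ := by
      apply le_antisymm
      · apply Submodule.topologicalClosure_minimal
        · intro g hg
          rw [LinearMap.mem_ker, hφapp]
          exact ((hM g).mp hg).2
        · have : (LinearMap.ker φ : Set H) = φ ⁻¹' {0} := by
            ext x; simp [LinearMap.mem_ker]
          rw [this]
          exact IsClosed.preimage hφcont isClosed_singleton
      · intro x hx
        have hx0 : (inner ℂ e x : ℂ) = 0 := hx
        set f : H → H := fun y => y - ((inner ℂ e y : ℂ) / (inner ℂ e d₀ : ℂ)) • d₀ with hfdef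
        have hfcont : Continuous f := by
          apply continuous_id.sub
          exact (hφcont.div_const _).smul continuous_const
        have hfx : f x = x := by
          rw [hfdef]
          simp only [hx0, zero_div, zero_smul, sub_zero]
        have himg : f '' (A₁.domain : Set H)
            ⊆ ((T₁.adjoint.domain ⊓ T₂.adjoint.domain : Submodule ℂ H) : Set H) := by
          rintro _ ⟨y, hy, rfl⟩
          rw [SetLike.mem_coe, hM]
          constructor
          · exact A₁.domain.sub_mem hy (A₁.domain.smul_mem _ hd₀mem)
          · rw [hfdef]
            simp only [inner_sub_right, inner_smul_right]
            rw [div_mul_cancel₀ _ hd₀ne, sub_self]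
        have hx1 : x ∈ closure (A₁.domain : Set H) := hA1d x
        have hx2 : f x ∈ f '' closure (A₁.domain : Set H) := Set.mem_image_of_mem f hx1
        have hx3 : f x ∈ closure (f '' (A₁.domain : Set H)) :=
          image_closure_subset_closure_image hfcont hx2
        rw [hfx] at hx3
        have hx4 : x ∈ closure
            ((T₁.adjoint.domain ⊓ T₂.adjoint.domain : Submodule ℂ H) : Set H) :=
          closure_mono himg hx3
        rwa [← Submodule.topologicalClosure_coe, SetLike.mem_coe] at hx4
    rw [hMker]
    have hsurj : Function.Surjective φ := by
      intro z
      exact ⟨z • e, by rw [LinearMap.map_smul, hφe, smul_eq_mul, mul_one]⟩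
    rw [φ.quotKerEquivRange.finrank_eq, LinearMap.range_eq_top.mpr hsurj, finrank_top,
      Module.finrank_self]

end
end

section
/- Let H be a separable complex Hilbert space and let {T(t)}_{t∈ℝ} be a weakly measurable family of densely defined closed linear operators in H. Suppose in addition that ∩_{t∈ℝ} dom(T(t)) is dense in H. Then the family of adjoints {T(t)*}_{t∈ℝ} is weakly measurable. -/
open MeasureTheory

noncomputable section

variable {H : Type*} [NormedAddCommGroup H] [InnerProductSpace ℂ H]

/-- In a separable Hilbert space, the inner product of two weakly measurable families of
vectors is measurable. -/
lemma weakMeasVec_inner {H : Type*} [NormedAddCommGroup H] [InnerProductSpace ℂ H]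
    [CompleteSpace H] [TopologicalSpace.SeparableSpace H]
    {g f : ℝ → H} (hg : WeakMeasVec g) (hf : WeakMeasVec f) :
    AEMeasurable (fun t : ℝ => (inner ℂ (g t) (f t) : ℂ)) volume := by
  obtain ⟨w, b, hb⟩ := exists_hilbertBasis ℂ H
  have horth : Orthonormal ℂ ((↑) : w → H) := hb ▸ b.orthonormal
  haveI : Countable w := by
    apply Pairwise.countable_of_isOpen_disjoint
      (s := fun i : w => Metric.ball (i : H) (1 / 2))
    · intro i j hij
      simp only [Function.onFun]
      rw [Set.disjoint_left]
      intro x hx hx'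
      have hdist : dist (i : H) (j : H) < 1 := by
        calc dist (i : H) (j : H) ≤ dist (i : H) x + dist x (j : H) := dist_triangle _ _ _
          _ < 1 / 2 + 1 / 2 := by
              have h1 : dist (i : H) x < 1 / 2 := by
                rw [dist_comm]; exact Metric.mem_ball.1 hx
              have h2 : dist x (j : H) < 1 / 2 := Metric.mem_ball.1 hx'
              linarith
          _ = 1 := by norm_num
      have hsq : ‖(i : H) - (j : H)‖ ^ 2 = 2 := by
        rw [@norm_sub_sq ℂ]
        rw [horth.2 hij, horth.1 i, horth.1 j]
        norm_num
      have h1 : ‖(i : H) - (j : H)‖ < 1 := by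
        rw [dist_eq_norm] at hdist; exact hdist
      nlinarith [norm_nonneg ((i : H) - (j : H))]
    · intro i; exact Metric.isOpen_ball
    · intro i; exact Metric.nonempty_ball.2 (by norm_num)
  have hterm : ∀ i : w, AEMeasurable
      (fun t : ℝ => (inner ℂ (g t) (b i) : ℂ) * (inner ℂ (b i) (f t) : ℂ)) volume := by
    intro i
    have h1 : AEMeasurable (fun t : ℝ => (inner ℂ (g t) (b i) : ℂ)) volume := by
      have : (fun t : ℝ => (inner ℂ (g t) (b i) : ℂ))
          = fun t : ℝ => (starRingEnd ℂ) (inner ℂ (b i) (g t) : ℂ) := by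
        funext t; rw [inner_conj_symm]
      rw [this]
      exact continuous_star.measurable.comp_aemeasurable (hg (b i))
    exact h1.mul (hf (b i))
  apply aemeasurable_of_tendsto_metrizable_ae (Filter.atTop : Filter (Finset w))
    (f := fun s : Finset w => fun t : ℝ =>
      ∑ i ∈ s, (inner ℂ (g t) (b i) : ℂ) * (inner ℂ (b i) (f t) : ℂ))
  · intro s
    exact Finset.aemeasurable_fun_sum s fun i _ => hterm i
  · filter_upwards with t
    exact b.hasSum_inner_mul_inner (g t) (f t)

/-- If a weakly measurable family of densely defined closed operators has
`⋂_t dom (T t)` dense, then the adjoint family is weakly measurable. -/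
theorem stmt_12 {H : Type*} [NormedAddCommGroup H] [InnerProductSpace ℂ H]
    [CompleteSpace H] [TopologicalSpace.SeparableSpace H]
    (T : ℝ → (H →ₗ.[ℂ] H))
    (hdense : ∀ t, Dense ((T t).domain : Set H)) (hclosed : ∀ t, (T t).IsClosed)
    (hmeas : WeakMeasFam T)
    (hint : Dense (⋂ t : ℝ, ((T t).domain : Set H))) :
    WeakMeasFam (fun t => (T t).adjoint) := by
  intro f hf h
  -- Step A: for `h` in the dense intersection of the domains.
  have stepA : ∀ h₀ ∈ ⋂ t : ℝ, ((T t).domain : Set H),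
      AEMeasurable (fun t : ℝ => (inner ℂ h₀ ((T t).adjoint (f t)) : ℂ)) volume := by
    intro h₀ hh₀
    have hmem : ∀ t, h₀ ∈ (T t).domain := fun t => Set.mem_iInter.1 hh₀ t
    set g : (t : ℝ) → (T t).domain := fun t => ⟨h₀, hmem t⟩ with hg
    have hgmeas : WeakMeasVec (fun t => (g t : H)) := fun k =>
      (aemeasurable_const : AEMeasurable (fun _ : ℝ => (inner ℂ k h₀ : ℂ)) volume)
    have hTg : WeakMeasVec (fun t => T t (g t)) := hmeas g hgmeas
    have key : ∀ t, (inner ℂ h₀ ((T t).adjoint (f t)) : ℂ)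
        = (inner ℂ (T t (g t)) ((f t : H)) : ℂ) := by
      intro t
      have hadj := (LinearPMap.adjoint_isFormalAdjoint (hdense t)) (f t) (g t)
      -- hadj : ⟪(T t).adjoint (f t), g t⟫ = ⟪(f t : H), T t (g t)⟫
      calc (inner ℂ h₀ ((T t).adjoint (f t)) : ℂ)
          = (starRingEnd ℂ) (inner ℂ ((T t).adjoint (f t)) h₀ : ℂ) := by
            rw [inner_conj_symm]
        _ = (starRingEnd ℂ) (inner ℂ ((f t : H)) (T t (g t)) : ℂ) := by
            rw [← hadj]
        _ = (inner ℂ (T t (g t)) ((f t : H)) : ℂ) := by rw [inner_conj_symm]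
    simp only [key]
    exact weakMeasVec_inner hTg hf
  -- Step B: extend to all of `H` by density.
  have hcl : h ∈ closure (⋂ t : ℝ, ((T t).domain : Set H)) := hint h
  obtain ⟨u, hu, hlim⟩ := mem_closure_iff_seq_limit.1 hcl
  apply aemeasurable_of_tendsto_metrizable_ae (Filter.atTop : Filter ℕ)
    (f := fun n => fun t : ℝ => (inner ℂ (u n) ((T t).adjoint (f t)) : ℂ))
  · intro n; exact stepA (u n) (hu n)
  · filter_upwards with t
    exact Filter.Tendsto.inner hlim tendsto_const_nhds

end
end

section
/- Let H be a separable complex Hilbert space and let {T(t)}_{t∈ℝ} be a weakly measurable family of densely defined closed linear operators in H. Suppose in addition that the maximally defined operator 𝒯 in L²(ℝ; H) is densely defined. Then the family of adjoints {T(t)*}_{t∈ℝ} is weakly measurable. -/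
open MeasureTheory

noncomputable section

variable {H : Type*} [NormedAddCommGroup H] [InnerProductSpace ℂ H]

open Filter Topology
lemma mixedInner {u v : ℝ → H} (hu : AEStronglyMeasurable u (volume : Measure ℝ))
    (hv : ∀ h : H, AEMeasurable (fun t : ℝ => (inner ℂ h (v t) : ℂ)) volume) :
    AEMeasurable (fun t : ℝ => (inner ℂ (u t) (v t) : ℂ)) volume := by
  classical
  have hsimple : ∀ s : SimpleFunc ℝ H,
      AEMeasurable (fun t : ℝ => (inner ℂ (s t) (v t) : ℂ)) volume := by
    intro s
    induction s using SimpleFunc.induction with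
    | @const c A hA =>
      have : (fun t : ℝ => (inner ℂ ((SimpleFunc.piecewise A hA (SimpleFunc.const ℝ c)
          (SimpleFunc.const ℝ 0)) t) (v t) : ℂ))
          = fun t => Set.indicator A (fun t => (inner ℂ c (v t) : ℂ)) t := by
        funext t
        by_cases ht : t ∈ A <;>
          simp [SimpleFunc.piecewise_apply, Set.indicator, ht]
      rw [this]
      exact (hv c).indicator hA
    | @add f g _ hf hg =>
      have : (fun t : ℝ => (inner ℂ ((f + g) t) (v t) : ℂ))
          = fun t => (inner ℂ (f t) (v t) : ℂ) + (inner ℂ (g t) (v t) : ℂ) := by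
        funext t; simp [inner_add_left]
      rw [this]
      exact hf.add hg
  set u' := hu.mk u with hu'def
  have hu' : StronglyMeasurable u' := hu.stronglyMeasurable_mk
  have key : AEMeasurable (fun t : ℝ => (inner ℂ (u' t) (v t) : ℂ)) volume := by
    refine aemeasurable_of_tendsto_metrizable_ae atTop
      (f := fun n => fun t => (inner ℂ (hu'.approx n t) (v t) : ℂ)) (fun n => hsimple _) ?_
    exact Filter.Eventually.of_forall fun t =>
      (hu'.tendsto_approx t).inner tendsto_const_nhds
  exact key.congr <| (hu.ae_eq_mk.symm.mono fun t ht => by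
    show (inner ℂ (hu.mk u t) (v t) : ℂ) = _; rw [ht])

/-- If a weakly measurable family of densely defined closed operators has
densely defined maximal operator `𝒯` in `L²(ℝ; H)`, then the adjoint family is weakly
measurable. -/
theorem stmt_13 {H : Type*} [NormedAddCommGroup H] [InnerProductSpace ℂ H]
    [CompleteSpace H] [TopologicalSpace.SeparableSpace H]
    (T : ℝ → (H →ₗ.[ℂ] H))
    (hdense : ∀ t, Dense ((T t).domain : Set H)) (hclosed : ∀ t, (T t).IsClosed)
    (hmeas : WeakMeasFam T)
    (𝒯 : Lp H 2 (volume : Measure ℝ) →ₗ.[ℂ] Lp H 2 (volume : Measure ℝ))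
    (h𝒯 : ∀ f g : Lp H 2 (volume : Measure ℝ),
      ((f, g) ∈ 𝒯.graph ↔
        ∀ᵐ t ∂(volume : Measure ℝ),
          ∃ hft : f t ∈ (T t).domain, T t ⟨f t, hft⟩ = g t))
    (h𝒯dense : Dense (𝒯.domain : Set (Lp H 2 (volume : Measure ℝ)))) :
    WeakMeasFam (fun t => (T t).adjoint) := by
  classical
  intro f hf h
  have hH : Nonempty H := ⟨0⟩
  set F : ℝ → H := fun t => (T t).adjoint (f t) with hFdef
  have hIoofin : ∀ n : ℕ, volume (Set.Ioo (-(n + 1 : ℝ)) (n + 1)) ≠ ⊤ := fun n => by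
    rw [Real.volume_Ioo]; exact ENNReal.ofReal_ne_top
  set q : ℕ → ℕ → Lp H 2 (volume : Measure ℝ) := fun m n =>
    indicatorConstLp 2 measurableSet_Ioo (hIoofin n) (TopologicalSpace.denseSeq H m) with hqdef
  have happrox : ∀ m n : ℕ, ∃ g : ℕ → 𝒯.domain,
      ∀ᵐ t ∂(volume : Measure ℝ),
        Tendsto (fun j => ((g j : Lp H 2 (volume : Measure ℝ))) t) atTop (𝓝 ((q m n) t)) := by
    intro m n
    obtain ⟨g, hgmem, hgtend⟩ := mem_closure_iff_seq_limit.1 (h𝒯dense (q m n))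
    obtain ⟨ns, _, hae⟩ := (tendstoInMeasure_of_tendsto_Lp hgtend).exists_seq_tendsto_ae
    exact ⟨fun j => ⟨g (ns j), hgmem (ns j)⟩, hae⟩
  choose G hGae using happrox
  set e : ℕ → ℕ × ℕ × ℕ := fun i => Denumerable.ofNat (ℕ × ℕ × ℕ) i with hedef
  set Gf : ℕ → 𝒯.domain := fun i => G (e i).1 (e i).2.1 (e i).2.2 with hGfdef
  set w : ℕ → Lp H 2 (volume : Measure ℝ) := fun i => 𝒯 (Gf i) with hwdef
  set u : ℕ → ℝ → H := fun i =>
    (Lp.aestronglyMeasurable ((Gf i : Lp H 2 (volume : Measure ℝ)))).mk _ with hudef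
  have hu : ∀ i, StronglyMeasurable (u i) := fun i =>
    AEStronglyMeasurable.stronglyMeasurable_mk _
  have huae : ∀ i, (⇑(Gf i : Lp H 2 (volume : Measure ℝ)) : ℝ → H) =ᵐ[volume] u i := fun i =>
    AEStronglyMeasurable.ae_eq_mk _
  have hφaem : ∀ i, AEMeasurable (fun t => (inner ℂ ((w i) t) ((f t : H)) : ℂ)) volume :=
    fun i => mixedInner (Lp.aestronglyMeasurable (w i)) hf
  set φ : ℕ → ℝ → ℂ := fun i => (hφaem i).mk _ with hφdef
  have hφmeas : ∀ i, Measurable (φ i) := fun i => (hφaem i).measurable_mk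
  have hgraph : ∀ i, ∀ᵐ t ∂(volume : Measure ℝ),
      ∃ hft : ((Gf i : Lp H 2 (volume : Measure ℝ)) t) ∈ (T t).domain,
        T t ⟨(Gf i : Lp H 2 (volume : Measure ℝ)) t, hft⟩ = (w i) t := fun i =>
    (h𝒯 _ _).1 (𝒯.mem_graph (Gf i))
  have hkey : ∀ i, ∀ᵐ t ∂(volume : Measure ℝ), φ i t = inner ℂ (u i t) (F t) := by
    intro i
    filter_upwards [hgraph i, huae i, (hφaem i).ae_eq_mk] with t hgt hut hφt
    obtain ⟨hdom, heq⟩ := hgt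
    have formal := (LinearPMap.adjoint_isFormalAdjoint (hdense t)) (f t)
      (⟨(Gf i : Lp H 2 (volume : Measure ℝ)) t, hdom⟩ : (T t).domain)
    rw [heq] at formal
    calc φ i t = inner ℂ ((w i) t) (f t : H) := hφt.symm
      _ = (starRingEnd ℂ) (inner ℂ ((f t : H)) ((w i) t)) := (inner_conj_symm _ _).symm
      _ = (starRingEnd ℂ) (inner ℂ (F t) ((Gf i : Lp H 2 (volume : Measure ℝ)) t)) := by
          rw [← formal]
      _ = inner ℂ ((Gf i : Lp H 2 (volume : Measure ℝ)) t) (F t) := inner_conj_symm _ _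
      _ = inner ℂ (u i t) (F t) := by rw [hut]
  set ε : ℕ → ℝ := fun k => 1 / ((k : ℝ) + 1) with hεdef
  have hεpos : ∀ k, 0 < ε k := fun k => by positivity
  have hdens : ∀ᵐ t ∂(volume : Measure ℝ), ∀ k : ℕ, ∃ i, ‖u i t - h‖ < ε k := by
    have hq : ∀ m n : ℕ, (⇑(q m n) : ℝ → H) =ᵐ[volume]
        (Set.Ioo (-(n + 1 : ℝ)) (n + 1)).indicator
          fun _ => TopologicalSpace.denseSeq H m :=
      fun m n => indicatorConstLp_coeFn
    filter_upwards [ae_all_iff.2 fun m => ae_all_iff.2 fun n => hGae m n,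
      ae_all_iff.2 fun m => ae_all_iff.2 fun n => hq m n,
      ae_all_iff.2 huae] with t htend hqt hut k
    have hhalf : (0 : ℝ) < ε k / 2 := by positivity
    obtain ⟨m, hm⟩ := (TopologicalSpace.denseRange_denseSeq H).exists_dist_lt h hhalf
    obtain ⟨n, hn⟩ := exists_nat_gt |t|
    have htIoo : t ∈ Set.Ioo (-(n + 1 : ℝ)) (n + 1) := by
      have h1 := abs_lt.1 hn
      constructor <;> [linarith [h1.1]; linarith [h1.2]]
    have hqval : (q m n) t = TopologicalSpace.denseSeq H m := by
      rw [hqt m n, Set.indicator_of_mem htIoo]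
    have htend' := htend m n
    rw [hqval] at htend'
    obtain ⟨N, hN⟩ := (Metric.tendsto_atTop.1 htend') (ε k / 2) hhalf
    set i : ℕ := Encodable.encode (m, n, N) with hidef
    have hei : e i = (m, n, N) := by
      rw [hedef, hidef]; exact Denumerable.ofNat_encode _
    have hGfi' : Gf i = G m n N := by simp only [hGfdef, hei]
    have hGfi : (Gf i : Lp H 2 (volume : Measure ℝ)) = (G m n N : Lp H 2 (volume : Measure ℝ)) := by
      rw [hGfi']
    refine ⟨i, ?_⟩
    have hdist1 : dist ((Gf i : Lp H 2 (volume : Measure ℝ)) t)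
        (TopologicalSpace.denseSeq H m) < ε k / 2 := by
      rw [hGfi]; exact hN N le_rfl
    have : ‖u i t - h‖ = dist (u i t) h := by rw [dist_eq_norm]
    rw [this, ← hut i]
    calc dist ((Gf i : Lp H 2 (volume : Measure ℝ)) t) h
        ≤ dist ((Gf i : Lp H 2 (volume : Measure ℝ)) t) (TopologicalSpace.denseSeq H m)
          + dist (TopologicalSpace.denseSeq H m) h := dist_triangle _ _ _
      _ < ε k / 2 + ε k / 2 := by
          have := dist_comm h (TopologicalSpace.denseSeq H m) ▸ hm
          exact add_lt_add hdist1 (by rwa [dist_comm] at hm)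
      _ = ε k := by ring
  have hexists : ∀ k : ℕ, ∀ t : ℝ,
      ∃ i : ℕ, (‖u i t - h‖ < ε k ∨ ∀ j, ¬ ‖u j t - h‖ < ε k) := by
    intro k t
    by_cases hc : ∃ i, ‖u i t - h‖ < ε k
    · obtain ⟨i, hi⟩ := hc; exact ⟨i, Or.inl hi⟩
    · exact ⟨0, Or.inr (not_exists.1 hc)⟩
  have hψmeas : ∀ k, Measurable (fun t => φ (Nat.find (hexists k t)) t) := by
    intro k
    refine Measurable.find hφmeas (fun i => ?_) (fun t => hexists k t)
    have hnm : ∀ j, Measurable fun t => ‖u j t - h‖ := fun j =>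
      (((hu j).sub stronglyMeasurable_const).norm).measurable
    have h1 : MeasurableSet {t : ℝ | ‖u i t - h‖ < ε k} :=
      measurableSet_lt (hnm i) measurable_const
    have h2 : MeasurableSet {t : ℝ | ∀ j, ¬ ‖u j t - h‖ < ε k} := by
      rw [Set.setOf_forall]
      exact MeasurableSet.iInter fun j =>
        (measurableSet_lt (hnm j) measurable_const).compl
    simpa only [Set.setOf_or] using h1.union h2
  refine aemeasurable_of_tendsto_metrizable_ae atTop
    (f := fun k => fun t => φ (Nat.find (hexists k t)) t)
    (fun k => (hψmeas k).aemeasurable) ?_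
  filter_upwards [hdens, ae_all_iff.2 hkey] with t hdt hkt
  have hbound : ∀ k, ‖φ (Nat.find (hexists k t)) t - inner ℂ h (F t)‖ ≤ ε k * ‖F t‖ := by
    intro k
    obtain ⟨i₀, hi₀⟩ := hdt k
    have hspec := Nat.find_spec (hexists k t)
    have hcond : ‖u (Nat.find (hexists k t)) t - h‖ < ε k := by
      rcases hspec with hc | hbad
      · exact hc
      · exact absurd hi₀ (hbad i₀)
    rw [hkt _]
    have hsub : (inner ℂ (u (Nat.find (hexists k t)) t) (F t) : ℂ) - inner ℂ h (F t)
        = inner ℂ (u (Nat.find (hexists k t)) t - h) (F t) := by rw [inner_sub_left]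
    rw [hsub]
    calc ‖(inner ℂ (u (Nat.find (hexists k t)) t - h) (F t) : ℂ)‖
        ≤ ‖u (Nat.find (hexists k t)) t - h‖ * ‖F t‖ := norm_inner_le_norm _ _
      _ ≤ ε k * ‖F t‖ := by
          exact mul_le_mul_of_nonneg_right hcond.le (norm_nonneg _)
  have hεt : Tendsto (fun k : ℕ => ε k * ‖F t‖) atTop (𝓝 0) := by
    have h0 := tendsto_one_div_add_atTop_nhds_zero_nat (𝕜 := ℝ)
    show Tendsto (fun k : ℕ => (1 / ((k : ℝ) + 1)) * ‖F t‖) atTop (𝓝 0)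
    simpa using h0.mul_const ‖F t‖
  rw [tendsto_iff_norm_sub_tendsto_zero]
  exact squeeze_zero (fun k => norm_nonneg _) hbound hεt


end
end
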